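/- arXiv:1108.4178 — 7 statements merged into one kernel-verified Lean document; each statement's English description precedes it below -/
import Mathlib

section
/- For any prime p ≥ 7, 2·∑_{k=1}^{p-1} 1/k ≡ -p·∑_{k=1}^{p-1} 1/k² (mod p⁴), where the sums are taken in the p-adic integers (or as rationals with p-adic valuation). -/
lemma sum_pow4 (n : ℕ) :
    30 * ∑ k ∈ Finset.range (n+1), (k:ℤ)^4
      = n*(n+1)*(2*n+1)*(3*n^2+3*n-1) := by
  induction n with
  | zero => simp
  | succ m ih =>
      rw [Finset.sum_range_succ, mul_add, ih]
      push_cast; ring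

lemma pdvd_sum_pow4 (p : ℕ) (hp : p.Prime) (h7 : 7 ≤ p) :
    (p:ℤ) ∣ ∑ k ∈ Finset.Icc 1 (p-1), (k:ℤ)^4 := by
  have hrange : ∑ k ∈ Finset.range ((p-1)+1), (k:ℤ)^4 = ∑ k ∈ Finset.Icc 1 (p-1), (k:ℤ)^4 := by
    rw [Finset.sum_range_succ']
    rw [show Finset.Icc 1 (p-1) = Finset.Ico 1 ((p-1)+1) by rw [Finset.Ico_add_one_right_eq_Icc]]
    rw [Finset.sum_Ico_eq_sum_range]
    simp [add_comm]
  have h30 : 30 * ∑ k ∈ Finset.Icc 1 (p-1), (k:ℤ)^4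
      = ((p:ℤ)-1)*p*(2*((p:ℤ)-1)+1)*(3*((p:ℤ)-1)^2+3*((p:ℤ)-1)-1) := by
    rw [← hrange, sum_pow4 (p-1)]
    have h1 : ((p-1:ℕ):ℤ) = (p:ℤ) - 1 := by
      push_cast [Nat.cast_sub (by omega : 1 ≤ p)]; ring
    rw [h1]; ring
  have hdvd30 : (p:ℤ) ∣ 30 * ∑ k ∈ Finset.Icc 1 (p-1), (k:ℤ)^4 := by
    rw [h30]
    exact Dvd.dvd.mul_right (Dvd.dvd.mul_right (dvd_mul_left _ _) _) _
  have hprime : Prime (p:ℤ) := Nat.prime_iff_prime_int.mp hp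
  rcases hprime.dvd_mul.mp hdvd30 with h | h
  · exfalso
    have h30' : p ∣ 30 := by exact_mod_cast h
    have : p ≤ 5 := by
      have h2 : p ∣ 2*(3*5) := by norm_num at h30' ⊢; exact h30'
      rcases hp.dvd_mul.mp h2 with h' | h'
      · exact le_trans (Nat.le_of_dvd (by norm_num) h') (by norm_num)
      · rcases hp.dvd_mul.mp h' with h'' | h''
        · exact le_trans (Nat.le_of_dvd (by norm_num) h'') (by norm_num)
        · exact Nat.le_of_dvd (by norm_num) h''
    omega
  · exact h

lemma pair_key (x y : ℚ) (hx : x ≠ 0) (hy : y ≠ 0) :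
    (2/x + (x+y)/x^2) + (2/y + (x+y)/y^2) = (x+y)^3 / (x^2*y^2) := by
  field_simp
  ring

/-- `a ≡ b (mod p^n)` in the `p`-adic sense for rationals. -/
def PadicCong (p : ℕ) (n : ℕ) (a b : ℚ) : Prop :=
  padicNorm p (a - b) ≤ (p : ℚ) ^ (-(n : ℤ))

theorem stmt0 (p : ℕ) (hp : p.Prime) (h7 : 7 ≤ p) :
    PadicCong p 4 (2 * (∑ k ∈ Finset.Icc 1 (p - 1), (1 : ℚ) / (k : ℚ))) (-(p : ℚ) * (∑ k ∈ Finset.Icc 1 (p - 1), (1 : ℚ) / (k : ℚ) ^ 2)) := by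
  haveI : Fact p.Prime := ⟨hp⟩
  haveI : NeZero p := ⟨by omega⟩
  have hp1 : 1 < p := by omega
  unfold PadicCong
  set S := Finset.Icc 1 (p - 1) with hS
  have hmem : ∀ k ∈ S, 1 ≤ k ∧ k ≤ p - 1 := fun k hk => by
    simpa [hS, Finset.mem_Icc] using hk
  have hknd : ∀ k ∈ S, ¬ p ∣ k := by
    intro k hk hd
    obtain ⟨h1, h2⟩ := hmem k hk
    have := Nat.le_of_dvd (by omega) hd; omega
  have hnorm : ∀ k ∈ S, padicNorm p (k:ℚ) = 1 := fun k hk =>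
    (padicNorm.nat_eq_one_iff _).2 (hknd k hk)
  have hk0 : ∀ k ∈ S, (k:ℚ) ≠ 0 := by
    intro k hk
    obtain ⟨h1, _⟩ := hmem k hk
    exact Nat.cast_ne_zero.2 (by omega)
  have hrefl : ∀ k ∈ S, p - k ∈ S := by
    intro k hk; obtain ⟨h1, h2⟩ := hmem k hk
    simp only [hS, Finset.mem_Icc]; omega
  have hcast : ∀ k ∈ S, ((p - k : ℕ) : ℚ) = (p:ℚ) - (k:ℚ) := by
    intro k hk; obtain ⟨h1, h2⟩ := hmem k hk
    push_cast [Nat.cast_sub (by omega : k ≤ p)]; ring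
  have hy0 : ∀ k ∈ S, ((p - k : ℕ) : ℚ) ≠ 0 := fun k hk => hk0 _ (hrefl k hk)
  -- the modular inverse permutation
  set σ : ℕ → ℕ := fun k => ((k : ZMod p)⁻¹).val with hσdef
  have hne0 : ∀ k ∈ S, ((k:ℕ) : ZMod p) ≠ 0 := by
    intro k hk h
    exact hknd k hk ((ZMod.natCast_eq_zero_iff k p).1 h)
  have hσcast : ∀ k : ℕ, ((σ k : ℕ) : ZMod p) = ((k:ZMod p))⁻¹ := fun k =>
    ZMod.natCast_rightInverse _
  have hσmem : ∀ k ∈ S, σ k ∈ S := by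
    intro k hk
    have h1 : ((k:ZMod p))⁻¹ ≠ 0 := inv_ne_zero (hne0 k hk)
    have h2 : σ k < p := ZMod.val_lt _
    have h3 : σ k ≠ 0 := fun h => h1 ((ZMod.val_eq_zero _).1 h)
    simp only [hS, Finset.mem_Icc]; omega
  have hσσ : ∀ k ∈ S, σ (σ k) = k := by
    intro k hk
    obtain ⟨h1, h2⟩ := hmem k hk
    show (((σ k : ℕ) : ZMod p)⁻¹).val = k
    rw [hσcast, inv_inv, ZMod.val_cast_of_lt (by omega : k < p)]
  have hkσ : ∀ k ∈ S, (p:ℤ) ∣ (k:ℤ) * (σ k:ℤ) - 1 := by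
    intro k hk
    rw [← ZMod.intCast_zmod_eq_zero_iff_dvd]
    push_cast
    rw [hσcast, mul_inv_cancel₀ (hne0 k hk)]
    ring
  -- Step A : the algebraic identity
  have hg : (2 * ∑ k ∈ S, (1:ℚ)/(k:ℚ)) - (-(p:ℚ) * ∑ k ∈ S, (1:ℚ)/(k:ℚ)^2)
      = ∑ k ∈ S, (2/(k:ℚ) + (p:ℚ)/(k:ℚ)^2) := by
    rw [neg_mul, sub_neg_eq_add, Finset.mul_sum, Finset.mul_sum, ← Finset.sum_add_distrib]
    refine Finset.sum_congr rfl fun k hk => ?_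
    ring
  have hswap : ∀ (f : ℕ → ℚ), ∑ k ∈ S, f k = ∑ k ∈ S, f (p - k) := by
    intro f
    refine Finset.sum_nbij' (fun k => p - k) (fun k => p - k) hrefl hrefl ?_ ?_ ?_
    · intro a ha; obtain ⟨h1, h2⟩ := hmem a ha; omega
    · intro a ha; obtain ⟨h1, h2⟩ := hmem a ha; omega
    · intro a ha
      obtain ⟨h1, h2⟩ := hmem a ha
      congr 1
      omega
  have htwo : 2 * ∑ k ∈ S, (2/(k:ℚ) + (p:ℚ)/(k:ℚ)^2)
      = (p:ℚ)^3 * ∑ k ∈ S, 1 / ((k:ℚ)^2 * ((p - k : ℕ):ℚ)^2) := by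
    rw [two_mul]
    nth_rewrite 1 [hswap (fun k => 2/(k:ℚ) + (p:ℚ)/(k:ℚ)^2)]
    rw [← Finset.sum_add_distrib, Finset.mul_sum]
    refine Finset.sum_congr rfl fun k hk => ?_
    have hx := hk0 k hk
    have hy := hy0 k hk
    have hpxy : (p:ℚ) = (k:ℚ) + ((p - k : ℕ):ℚ) := by rw [hcast k hk]; ring
    rw [hpxy]
    have := pair_key (k:ℚ) ((p - k : ℕ):ℚ) hx hy
    rw [mul_one_div]
    linear_combination this
  set T : ℚ := ∑ k ∈ S, 1 / ((k:ℚ)^2 * ((p - k : ℕ):ℚ)^2) with hT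
  have hfact : (2 * ∑ k ∈ S, (1:ℚ)/(k:ℚ)) - (-(p:ℚ) * ∑ k ∈ S, (1:ℚ)/(k:ℚ)^2)
      = ((p:ℚ)^3 / 2) * T := by
    have := htwo
    rw [← hg] at this
    linarith
  rw [hfact]
  -- Step B : norm of T is at most 1/p
  have hTbound : padicNorm p T ≤ (p:ℚ)^(-1:ℤ) := by
    have hsplit : T = (∑ k ∈ S, (1/((k:ℚ)^2 * ((p - k : ℕ):ℚ)^2) - 1/(k:ℚ)^4))
        + ((∑ k ∈ S, (1/(k:ℚ)^4 - ((σ k : ℕ):ℚ)^4)) + ∑ k ∈ S, ((σ k : ℕ):ℚ)^4) := by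
      rw [hT, ← Finset.sum_add_distrib, ← Finset.sum_add_distrib]
      refine Finset.sum_congr rfl fun k hk => ?_
      ring
    have hppos : (0:ℚ) < (p:ℚ)^(-1:ℤ) := by
      apply zpow_pos; exact_mod_cast (by omega : 0 < p)
    have hA : padicNorm p (∑ k ∈ S, (1/((k:ℚ)^2 * ((p - k : ℕ):ℚ)^2) - 1/(k:ℚ)^4))
        ≤ (p:ℚ)^(-1:ℤ) := by
      refine padicNorm.sum_le' (fun k hk => ?_) hppos.le
      have hx := hk0 k hk
      have hy := hy0 k hk
      have hterm : 1/((k:ℚ)^2 * ((p - k : ℕ):ℚ)^2) - 1/(k:ℚ)^4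
          = (p:ℚ) * (((2*(k:ℤ) - (p:ℤ) : ℤ)):ℚ) / ((k:ℚ)^4 * ((p - k : ℕ):ℚ)^2) := by
        have hpxy : (p:ℚ) = (k:ℚ) + ((p - k : ℕ):ℚ) := by rw [hcast k hk]; ring
        push_cast
        rw [hpxy]
        field_simp
        ring
      rw [hterm, padicNorm.div, padicNorm.mul]
      have h1 : padicNorm p (p:ℚ) = ((p:ℚ))⁻¹ := padicNorm.padicNorm_p hp1
      have h2 : padicNorm p (((2*(k:ℤ) - (p:ℤ) : ℤ)):ℚ) ≤ 1 := padicNorm.of_int _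
      have h3 : padicNorm p ((k:ℚ)^4 * ((p - k : ℕ):ℚ)^2) = 1 := by
        rw [padicNorm.mul, show ((k:ℚ)^4) = (k:ℚ)*(k:ℚ)*(k:ℚ)*(k:ℚ) by ring,
          show (((p - k : ℕ):ℚ)^2) = ((p - k : ℕ):ℚ)*((p - k : ℕ):ℚ) by ring]
        rw [padicNorm.mul, padicNorm.mul, padicNorm.mul, padicNorm.mul,
          hnorm k hk, hnorm _ (hrefl k hk)]
        norm_num
      rw [h1, h3, div_one]
      calc ((p:ℚ))⁻¹ * padicNorm p (((2*(k:ℤ) - (p:ℤ) : ℤ)):ℚ)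
          ≤ ((p:ℚ))⁻¹ * 1 := by
            apply mul_le_mul_of_nonneg_left h2
            positivity
        _ = (p:ℚ)^(-1:ℤ) := by rw [mul_one, zpow_neg_one]
    have hB : padicNorm p (∑ k ∈ S, (1/(k:ℚ)^4 - ((σ k : ℕ):ℚ)^4)) ≤ (p:ℚ)^(-1:ℤ) := by
      refine padicNorm.sum_le' (fun k hk => ?_) hppos.le
      have hx := hk0 k hk
      have hterm : 1/(k:ℚ)^4 - ((σ k : ℕ):ℚ)^4
          = ((1 - ((k:ℤ) * (σ k:ℤ))^4 : ℤ):ℚ) / (k:ℚ)^4 := by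
        push_cast
        field_simp
      rw [hterm, padicNorm.div]
      have h3 : padicNorm p ((k:ℚ)^4) = 1 := by
        rw [show ((k:ℚ)^4) = (k:ℚ)*(k:ℚ)*(k:ℚ)*(k:ℚ) by ring]
        rw [padicNorm.mul, padicNorm.mul, padicNorm.mul, hnorm k hk]
        norm_num
      rw [h3, div_one]
      have hdvd : ((p^1 : ℕ):ℤ) ∣ (1 - ((k:ℤ) * (σ k:ℤ))^4 : ℤ) := by
        push_cast [pow_one]
        rw [show (1 - ((k:ℤ) * (σ k:ℤ))^4 : ℤ) = -(((k:ℤ) * (σ k:ℤ))^4 - 1^4) by ring]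
        exact dvd_neg.mpr ((hkσ k hk).trans (sub_dvd_pow_sub_pow _ 1 4))
      have := (padicNorm.dvd_iff_norm_le (p := p)).1 hdvd
      simpa using this
    have hC : padicNorm p (∑ k ∈ S, ((σ k : ℕ):ℚ)^4) ≤ (p:ℚ)^(-1:ℤ) := by
      have heq : ∑ k ∈ S, ((σ k : ℕ):ℚ)^4 = ∑ k ∈ S, ((k:ℕ):ℚ)^4 := by
        refine Finset.sum_nbij' σ σ hσmem hσmem hσσ hσσ (fun a ha => rfl)
      have heq2 : ∑ k ∈ S, ((k:ℕ):ℚ)^4 = (((∑ k ∈ S, (k:ℤ)^4 : ℤ)):ℚ) := by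
        push_cast; rfl
      rw [heq, heq2]
      have hdvd : ((p^1 : ℕ):ℤ) ∣ (∑ k ∈ S, (k:ℤ)^4 : ℤ) := by
        push_cast [pow_one]
        rw [hS]
        exact pdvd_sum_pow4 p hp h7
      have := (padicNorm.dvd_iff_norm_le (p := p)).1 hdvd
      simpa using this
    rw [hsplit]
    refine le_trans padicNorm.nonarchimedean (max_le hA ?_)
    exact le_trans padicNorm.nonarchimedean (max_le hB hC)
  -- Step C : combine
  rw [padicNorm.mul, padicNorm.div]
  have hnp3 : padicNorm p ((p:ℚ)^3) = (p:ℚ)^(-3:ℤ) := by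
    rw [show ((p:ℚ)^3) = (p:ℚ)*(p:ℚ)*(p:ℚ) by ring,
      padicNorm.mul, padicNorm.mul, padicNorm.padicNorm_p hp1]
    rw [show ((-3:ℤ)) = (-1) + (-1) + (-1) by norm_num]
    rw [zpow_add₀ (by exact_mod_cast (by omega : p ≠ 0)), zpow_add₀ (by exact_mod_cast (by omega : p ≠ 0))]
    simp [zpow_neg_one]
  have hn2 : padicNorm p (2:ℚ) = 1 := by
    have : ¬ p ∣ 2 := fun h => absurd (Nat.le_of_dvd (by norm_num) h) (by omega)
    have := (padicNorm.nat_eq_one_iff (p := p) 2).2 this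
    simpa using this
  rw [hnp3, hn2, div_one]
  calc (p:ℚ)^(-3:ℤ) * padicNorm p T ≤ (p:ℚ)^(-3:ℤ) * (p:ℚ)^(-1:ℤ) := by
        apply mul_le_mul_of_nonneg_left hTbound
        positivity
    _ = (p:ℚ)^(-(4:ℕ):ℤ) := by
        rw [← zpow_add₀ (by exact_mod_cast (by omega : p ≠ 0) : (p:ℚ) ≠ 0)]
        norm_num
end

section
/- For any prime p ≥ 7, the binomial coefficient C(2p-1, p-1) ≡ 1 + 2p·∑_{k=1}^{p-1} 1/k (mod p⁵). -/
open Finset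

lemma expand_prod {R S : Type*} [CommRing R] [CommRing S] (π : R →+* S) (q : R)
    (hq : q ^ 5 = 0) (s : Finset ℕ) (u : ℕ → R) :
    ∃ c : R, ∏ k ∈ s, (1 + q ^ 2 * u k) = 1 + q ^ 2 * (∑ k ∈ s, u k) + q ^ 4 * c ∧
      2 * π c = (π (∑ k ∈ s, u k)) ^ 2 - π (∑ k ∈ s, (u k) ^ 2) := by
  classical
  induction s using Finset.induction_on with
  | empty => exact ⟨0, by simp⟩
  | @insert a s ha ih =>
    obtain ⟨c, hc1, hc2⟩ := ih
    refine ⟨c + u a * ∑ k ∈ s, u k, ?_, ?_⟩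
    · rw [Finset.prod_insert ha, Finset.sum_insert ha, hc1]
      have h6 : q ^ 6 = 0 := by
        calc q ^ 6 = q ^ 5 * q := by ring
        _ = 0 := by rw [hq, zero_mul]
      linear_combination (u a * c) * h6
    · rw [Finset.sum_insert ha, Finset.sum_insert ha]
      simp only [map_add, map_mul, map_sum, map_pow] at hc2 ⊢
      ring_nf at hc2 ⊢
      linear_combination hc2

lemma kill_p4 (p : ℕ) (hp : 0 < p) (c : ZMod (p ^ 5))
    (h : (ZMod.castHom (dvd_pow_self p (by norm_num : (5:ℕ) ≠ 0)) (ZMod p)) c = 0) :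
    (p : ZMod (p ^ 5)) ^ 4 * c = 0 := by
  have hne : NeZero (p ^ 5) := ⟨by positivity⟩
  have hc : ((c.val : ℕ) : ZMod (p ^ 5)) = c := by
    rw [ZMod.natCast_val, ZMod.cast_id]
  have h2 : ((c.val : ℕ) : ZMod p) = 0 := by
    rw [← map_natCast (ZMod.castHom (dvd_pow_self p (by norm_num : (5:ℕ) ≠ 0)) (ZMod p)), hc, h]
  rw [ZMod.natCast_eq_zero_iff] at h2
  obtain ⟨t, ht⟩ := h2
  rw [← hc, ht]
  push_cast
  rw [show ((p : ZMod (p^5)) ^ 4 * ((p : ZMod (p^5)) * t)) = (p : ZMod (p^5)) ^ 5 * t by ring]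
  rw [show ((p : ZMod (p^5)) ^ 5) = ((p ^ 5 : ℕ) : ZMod (p ^ 5)) by push_cast; ring,
    ZMod.natCast_self, zero_mul]

@[to_additive pair_sum]
lemma pair_prod {M : Type*} [CommMonoid M] (m : ℕ) (f : ℕ → M) :
    ∏ k ∈ Icc 1 (2 * m), f k = ∏ k ∈ Icc 1 m, (f k * f (2 * m + 1 - k)) := by
  rw [prod_mul_distrib]
  have h1 : Icc 1 (2 * m) = Ioc 0 (2 * m) := Finset.Icc_add_one_left_eq_Ioc 0 (2 * m)
  have h2 : Icc 1 m = Ioc 0 m := Finset.Icc_add_one_left_eq_Ioc 0 m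
  rw [h1, h2, ← Finset.prod_Ioc_consecutive f (Nat.zero_le m) (by omega : m ≤ 2 * m)]
  congr 1
  refine Finset.prod_nbij' (fun k => 2 * m + 1 - k) (fun k => 2 * m + 1 - k) ?_ ?_ ?_ ?_ ?_ <;>
    intro a ha <;> simp only [mem_Ioc] at * <;> first | omega | (congr 1; omega)

lemma sum_inv_pow_full (p : ℕ) [Fact p.Prime] {n : ℕ} (hn : 0 < n) (hn2 : n < p - 1) :
    ∑ k ∈ Icc 1 (p - 1), ((k : ZMod p)⁻¹) ^ n = 0 := by
  have hp : p.Prime := Fact.out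
  have h2 : (2 : ℕ) ≤ p := hp.two_le
  have key : ∑ k ∈ Icc 1 (p - 1), ((k : ZMod p)⁻¹) ^ n = ∑ x : ZMod p, x ^ n := by
    rw [← Finset.sum_subset (Finset.subset_univ (Finset.univ.filter (· ≠ (0 : ZMod p))))]
    · refine Finset.sum_nbij' (fun k => ((k : ZMod p))⁻¹) (fun x => (x⁻¹ : ZMod p).val) ?_ ?_ ?_ ?_ ?_
      · intro a ha
        simp only [mem_Icc] at ha
        simp only [mem_filter, mem_univ, true_and]
        have : (a : ZMod p) ≠ 0 := by
          rw [Ne, ZMod.natCast_eq_zero_iff]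
          intro hdvd
          have := Nat.le_of_dvd (by omega) hdvd
          omega
        exact inv_ne_zero this
      · intro x hx
        simp only [mem_filter, mem_univ, true_and] at hx
        have hx' : x⁻¹ ≠ 0 := inv_ne_zero hx
        have hval : (x⁻¹ : ZMod p).val ≠ 0 := by
          rw [Ne, ZMod.val_eq_zero]; exact hx'
        have hlt : (x⁻¹ : ZMod p).val < p := ZMod.val_lt _
        simp only [mem_Icc]; omega
      · intro a ha
        simp only [mem_Icc] at ha
        have : (a : ZMod p) ≠ 0 := by
          rw [Ne, ZMod.natCast_eq_zero_iff]
          intro hdvd; have := Nat.le_of_dvd (by omega) hdvd; omega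
        show ((a : ZMod p)⁻¹)⁻¹.val = a
        rw [inv_inv, ZMod.val_cast_of_lt (by omega)]
      · intro x hx
        simp only [mem_filter, mem_univ, true_and] at hx
        show (((x⁻¹ : ZMod p).val : ℕ) : ZMod p)⁻¹ = x
        rw [ZMod.natCast_val, ZMod.cast_id, inv_inv]
      · intro a ha; rfl
    · intro x _ hx
      simp only [mem_filter, mem_univ, true_and, not_not] at hx
      rw [hx, zero_pow (by omega)]
  rw [key]
  have := FiniteField.sum_pow_lt_card_sub_one (ZMod p) n (by rwa [ZMod.card])
  exact this

lemma sum_inv_pow_half (p m : ℕ) [Fact p.Prime] (hpm : p = 2 * m + 1) {n : ℕ}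
    (hn : 0 < n) (hne : Even n) (hn2 : n < p - 1)
    (hfull : ∑ k ∈ Icc 1 (p - 1), ((k : ZMod p)⁻¹) ^ n = 0) :
    ∑ k ∈ Icc 1 m, ((k : ZMod p)⁻¹) ^ n = 0 := by
  have hp : p.Prime := Fact.out
  have h1 : p - 1 = 2 * m := by omega
  rw [h1, pair_sum m (fun k => ((k : ZMod p)⁻¹) ^ n)] at hfull
  have heq : ∀ k ∈ Icc 1 m, (((2 * m + 1 - k : ℕ) : ZMod p)⁻¹) ^ n = ((k : ZMod p)⁻¹) ^ n := by
    intro k hk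
    simp only [mem_Icc] at hk
    have hcast : ((2 * m + 1 - k : ℕ) : ZMod p) = -(k : ZMod p) := by
      have hk' : k ≤ 2 * m + 1 := by omega
      have h0 : ((2 * m + 1 : ℕ) : ZMod p) = 0 := by rw [← hpm]; exact ZMod.natCast_self p
      rw [Nat.cast_sub hk', h0, zero_sub]
    rw [hcast, inv_neg, hne.neg_pow]
  rw [Finset.sum_congr rfl (fun k hk => by rw [heq k hk])] at hfull
  rw [Finset.sum_add_distrib] at hfull
  have h2 : (2 : ZMod p) * ∑ k ∈ Icc 1 m, ((k : ZMod p)⁻¹) ^ n = 0 := by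
    rw [two_mul]; exact hfull
  have h2ne : (2 : ZMod p) ≠ 0 := by
    have hh : ((2 : ℕ) : ZMod p) ≠ 0 := by
      rw [Ne, ZMod.natCast_eq_zero_iff]
      intro hd
      have := Nat.le_of_dvd (by norm_num) hd
      omega
    simpa using hh
  exact (mul_eq_zero.mp h2).resolve_left h2ne

lemma main_zmod (p m : ℕ) (hp : p.Prime) (h7 : 7 ≤ p) (hpm : p = 2 * m + 1) :
    ((∏ k ∈ Icc 1 (p - 1), (p + k) : ℕ) : ZMod (p ^ 5)) =
      ((Nat.factorial (p - 1) : ℕ) : ZMod (p ^ 5)) +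
        2 * (p : ZMod (p ^ 5)) *
          ((∑ k ∈ Icc 1 (p - 1), Nat.factorial (p - 1) / k : ℕ) : ZMod (p ^ 5)) := by
  haveI : Fact p.Prime := ⟨hp⟩
  have h2m : p - 1 = 2 * m := by omega
  -- units
  have hunit : ∀ k, k ∈ Icc 1 (p - 1) → IsUnit ((k : ℕ) : ZMod (p ^ 5)) := by
    intro k hk
    simp only [mem_Icc] at hk
    rw [ZMod.isUnit_iff_coprime]
    exact Nat.Coprime.pow_right 5
      (((hp.coprime_iff_not_dvd).mpr (by intro hd; have := Nat.le_of_dvd (by omega) hd; omega)).symm)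
  have hNdvd : ∀ k ∈ Icc 1 (p - 1), k ∣ Nat.factorial (p - 1) := by
    intro k hk; simp only [mem_Icc] at hk
    exact Nat.dvd_factorial (by omega) hk.2
  -- N/k = N * k⁻¹ in R
  have hdivk : ∀ k ∈ Icc 1 (p - 1),
      ((Nat.factorial (p - 1) / k : ℕ) : ZMod (p ^ 5))
        = ((Nat.factorial (p - 1) : ℕ) : ZMod (p ^ 5)) * ((k : ℕ) : ZMod (p ^ 5))⁻¹ := by
    intro k hk
    have h1 : (Nat.factorial (p - 1) / k) * k = Nat.factorial (p - 1) :=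
      Nat.div_mul_cancel (hNdvd k hk)
    have h2 : ((Nat.factorial (p - 1) / k : ℕ) : ZMod (p ^ 5)) * (k : ZMod (p ^ 5))
        = ((Nat.factorial (p - 1) : ℕ) : ZMod (p ^ 5)) := by exact_mod_cast congrArg _ h1
    have h3 := ZMod.mul_inv_of_unit _ (hunit k hk)
    linear_combination (-((Nat.factorial (p - 1) / k : ℕ) : ZMod (p ^ 5))) * h3
      + ((k : ZMod (p ^ 5)))⁻¹ * h2
  -- N as a product
  have hNcast : ((Nat.factorial (p - 1) : ℕ) : ZMod (p ^ 5))
      = ∏ k ∈ Icc 1 (p - 1), ((k : ℕ) : ZMod (p ^ 5)) := by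
    rw [← Nat.cast_prod]
    congr 1
    rw [← Finset.prod_Ico_id_eq_factorial (p - 1), Finset.Ico_add_one_right_eq_Icc]
  -- factor the product
  have hfact : ((∏ k ∈ Icc 1 (p - 1), (p + k) : ℕ) : ZMod (p ^ 5))
      = ((Nat.factorial (p - 1) : ℕ) : ZMod (p ^ 5)) *
          ∏ k ∈ Icc 1 (p - 1), (1 + (p : ZMod (p ^ 5)) * ((k : ℕ) : ZMod (p ^ 5))⁻¹) := by
    rw [Nat.cast_prod, hNcast, ← Finset.prod_mul_distrib]
    refine Finset.prod_congr rfl fun k hk => ?_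
    have h3 := ZMod.mul_inv_of_unit _ (hunit k hk)
    push_cast
    linear_combination (-(p : ZMod (p ^ 5))) * h3
  -- sum N/k = N * sum k⁻¹
  have hsum : ((∑ k ∈ Icc 1 (p - 1), Nat.factorial (p - 1) / k : ℕ) : ZMod (p ^ 5))
      = ((Nat.factorial (p - 1) : ℕ) : ZMod (p ^ 5)) *
          ∑ k ∈ Icc 1 (p - 1), ((k : ℕ) : ZMod (p ^ 5))⁻¹ := by
    rw [Nat.cast_sum, Finset.mul_sum]
    exact Finset.sum_congr rfl hdivk
  rw [hfact, hsum]
  have key : ∏ k ∈ Icc 1 (p - 1), (1 + (p : ZMod (p ^ 5)) * ((k : ℕ) : ZMod (p ^ 5))⁻¹)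
      = 1 + 2 * (p : ZMod (p ^ 5)) * ∑ k ∈ Icc 1 (p - 1), ((k : ℕ) : ZMod (p ^ 5))⁻¹ := by
    have hmem : ∀ k ∈ Icc 1 m, k ∈ Icc 1 (p - 1) := by
      intro k hk; simp only [mem_Icc] at *; omega
    have hbmem : ∀ k ∈ Icc 1 m, (2 * m + 1 - k) ∈ Icc 1 (p - 1) := by
      intro k hk; simp only [mem_Icc] at *; omega
    have hcastb : ∀ k ∈ Icc 1 m,
        (((2 * m + 1 - k : ℕ)) : ZMod (p ^ 5)) = (p : ZMod (p ^ 5)) - (k : ZMod (p ^ 5)) := by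
      intro k hk; simp only [mem_Icc] at hk
      rw [Nat.cast_sub (by omega)]
      have : ((2 * m + 1 : ℕ) : ZMod (p ^ 5)) = ((p : ℕ) : ZMod (p ^ 5)) := congrArg _ hpm.symm
      rw [this]
    set q : ZMod (p ^ 5) := (p : ZMod (p ^ 5)) with hqdef
    set v : ℕ → ZMod (p ^ 5) :=
      fun k => ((k : ℕ) : ZMod (p ^ 5))⁻¹ * (((2 * m + 1 - k : ℕ)) : ZMod (p ^ 5))⁻¹ with hv
    have pairF : ∀ k ∈ Icc 1 m,
        (1 + q * ((k : ℕ) : ZMod (p ^ 5))⁻¹) * (1 + q * (((2 * m + 1 - k : ℕ)) : ZMod (p ^ 5))⁻¹)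
          = 1 + q ^ 2 * (2 * v k) := by
      intro k hk
      have h3a := ZMod.mul_inv_of_unit _ (hunit k (hmem k hk))
      have h3b := ZMod.mul_inv_of_unit _ (hunit _ (hbmem k hk))
      have hab : ((k : ℕ) : ZMod (p ^ 5)) + (((2 * m + 1 - k : ℕ)) : ZMod (p ^ 5)) = q := by
        rw [hcastb k hk]; ring
      simp only [hv]
      linear_combination (-(q) * (((2 * m + 1 - k : ℕ)) : ZMod (p ^ 5))⁻¹) * h3a
        + (-(q) * ((k : ℕ) : ZMod (p ^ 5))⁻¹) * h3b
        + (q * ((k : ℕ) : ZMod (p ^ 5))⁻¹ * (((2 * m + 1 - k : ℕ)) : ZMod (p ^ 5))⁻¹) * hab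
    have pairS : ∀ k ∈ Icc 1 m,
        ((k : ℕ) : ZMod (p ^ 5))⁻¹ + (((2 * m + 1 - k : ℕ)) : ZMod (p ^ 5))⁻¹ = q * v k := by
      intro k hk
      have h3a := ZMod.mul_inv_of_unit _ (hunit k (hmem k hk))
      have h3b := ZMod.mul_inv_of_unit _ (hunit _ (hbmem k hk))
      have hab : ((k : ℕ) : ZMod (p ^ 5)) + (((2 * m + 1 - k : ℕ)) : ZMod (p ^ 5)) = q := by
        rw [hcastb k hk]; ring
      simp only [hv]
      linear_combination (-((((2 * m + 1 - k : ℕ)) : ZMod (p ^ 5))⁻¹)) * h3a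
        + (-(((k : ℕ) : ZMod (p ^ 5))⁻¹)) * h3b
        + (((k : ℕ) : ZMod (p ^ 5))⁻¹ * (((2 * m + 1 - k : ℕ)) : ZMod (p ^ 5))⁻¹) * hab
    rw [h2m, pair_prod m (fun k => 1 + q * ((k : ℕ) : ZMod (p ^ 5))⁻¹),
      pair_sum m (fun k => ((k : ℕ) : ZMod (p ^ 5))⁻¹),
      Finset.prod_congr rfl pairF, Finset.sum_congr rfl pairS]
    -- expansion
    have hq5 : q ^ 5 = 0 := by
      rw [hqdef, show ((p : ZMod (p ^ 5)) ^ 5) = ((p ^ 5 : ℕ) : ZMod (p ^ 5)) by push_cast; ring,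
        ZMod.natCast_self]
    set π := ZMod.castHom (dvd_pow_self p (by norm_num : (5:ℕ) ≠ 0)) (ZMod p) with hπ
    obtain ⟨c, hc1, hc2⟩ := expand_prod π q hq5 (Icc 1 m) (fun k => 2 * v k)
    -- π of v
    have hπv : ∀ k ∈ Icc 1 m, π (v k) = -(((k : ZMod p))⁻¹) ^ 2 := by
      intro k hk
      simp only [mem_Icc] at hk
      have h3a := ZMod.mul_inv_of_unit _ (hunit k (hmem k (by simp only [mem_Icc]; omega)))
      have h3b := ZMod.mul_inv_of_unit _ (hunit _ (hbmem k (by simp only [mem_Icc]; omega)))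
      have ha' : π (((k : ℕ) : ZMod (p ^ 5))⁻¹) = ((k : ZMod p))⁻¹ := by
        have := congrArg π h3a
        rw [map_mul, map_one, map_natCast] at this
        exact (inv_eq_of_mul_eq_one_right this).symm
      have hbcast : π ((((2 * m + 1 - k : ℕ)) : ZMod (p ^ 5))) = -(k : ZMod p) := by
        rw [map_natCast, Nat.cast_sub (by omega : k ≤ 2 * m + 1)]
        have h0 : ((2 * m + 1 : ℕ) : ZMod p) = 0 := by rw [← hpm]; exact ZMod.natCast_self p
        rw [h0, zero_sub]
      have hb' : π ((((2 * m + 1 - k : ℕ)) : ZMod (p ^ 5))⁻¹) = -((k : ZMod p))⁻¹ := by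
        have := congrArg π h3b
        rw [map_mul, map_one, hbcast] at this
        have h2 := (inv_eq_of_mul_eq_one_right this).symm
        rw [h2, inv_neg]
      simp only [hv, map_mul, ha', hb']
      ring
    have hQ2 : ∑ k ∈ Icc 1 m, (((k : ZMod p))⁻¹) ^ 2 = 0 :=
      sum_inv_pow_half p m hpm (by norm_num) (by norm_num) (by omega)
        (sum_inv_pow_full p (by norm_num) (by omega))
    have hQ4 : ∑ k ∈ Icc 1 m, (((k : ZMod p))⁻¹) ^ 4 = 0 :=
      sum_inv_pow_half p m hpm (by norm_num) (by decide) (by omega)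
        (sum_inv_pow_full p (by norm_num) (by omega))
    have hS1 : π (∑ k ∈ Icc 1 m, 2 * v k) = 0 := by
      rw [map_sum]
      have : ∀ k ∈ Icc 1 m, π (2 * v k) = 2 * (-(((k : ZMod p))⁻¹) ^ 2) := by
        intro k hk; rw [map_mul, map_ofNat, hπv k hk]
      rw [Finset.sum_congr rfl this]
      simp only [mul_neg, Finset.sum_neg_distrib, ← Finset.mul_sum]
      rw [hQ2]; ring
    have hS2 : π (∑ k ∈ Icc 1 m, (2 * v k) ^ 2) = 0 := by
      rw [map_sum]
      have : ∀ k ∈ Icc 1 m, π ((2 * v k) ^ 2) = 4 * (((k : ZMod p))⁻¹) ^ 4 := by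
        intro k hk; rw [map_pow, map_mul, map_ofNat, hπv k hk]; ring
      rw [Finset.sum_congr rfl this, ← Finset.mul_sum, hQ4]; ring
    have hπc : π c = 0 := by
      have h2c : 2 * π c = 0 := by rw [hc2, hS1, hS2]; ring
      have h2ne : (2 : ZMod p) ≠ 0 := by
        have hh : ((2 : ℕ) : ZMod p) ≠ 0 := by
          rw [Ne, ZMod.natCast_eq_zero_iff]
          intro hd; have := Nat.le_of_dvd (by norm_num) hd; omega
        simpa using hh
      exact (mul_eq_zero.mp h2c).resolve_left h2ne
    have hkill : q ^ 4 * c = 0 := kill_p4 p (by omega) c hπc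
    rw [hc1, hkill, ← Finset.mul_sum, ← Finset.mul_sum]
    ring
  rw [key]; ring

theorem stmt1 (p : ℕ) (hp : p.Prime) (h7 : 7 ≤ p) :
    PadicCong p 5 ((Nat.choose (2 * p - 1) (p - 1)) : ℚ) (1 + 2 * (p : ℚ) * (∑ k ∈ Finset.Icc 1 (p - 1), (1 : ℚ) / (k : ℚ))) := by
  haveI : Fact p.Prime := ⟨hp⟩
  obtain ⟨m, hpm⟩ : ∃ m, p = 2 * m + 1 := by
    have : Odd p := hp.odd_of_ne_two (by omega)
    obtain ⟨m, hm⟩ := this; exact ⟨m, by omega⟩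
  have hN0 : (Nat.factorial (p - 1) : ℚ) ≠ 0 := by
    exact_mod_cast Nat.factorial_ne_zero (p - 1)
  -- Claim 1 : choose * (p-1)! = ∏ (p+k)
  have claim1 : Nat.choose (2 * p - 1) (p - 1) * Nat.factorial (p - 1)
      = ∏ k ∈ Icc 1 (p - 1), (p + k) := by
    have h1 : Nat.choose (2 * p - 1) (p - 1) * Nat.factorial (p - 1) * Nat.factorial p
        = Nat.factorial (2 * p - 1) := by
      have := Nat.choose_mul_factorial_mul_factorial (show p - 1 ≤ 2 * p - 1 by omega)
      rwa [show 2 * p - 1 - (p - 1) = p by omega] at this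
    have h2 : (∏ k ∈ Icc 1 (p - 1), (p + k)) * Nat.factorial p
        = Nat.factorial (2 * p - 1) := by
      have hA : ∏ k ∈ Icc 1 (p - 1), (p + k) = ∏ k ∈ Ico 1 p, (p + k) := by
        apply Finset.prod_congr _ (fun _ _ => rfl)
        ext x
        simp only [mem_Icc, mem_Ico]
        omega
      have hshift : ∏ k ∈ Ico 1 p, (p + k) = ∏ k ∈ Ico (1 + p) (p + p), k :=
        Finset.prod_Ico_add (fun x => x) 1 p p
      have hcons : (∏ k ∈ Ico 1 (p + 1), k) * ∏ k ∈ Ico (p + 1) (2 * p), k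
          = ∏ k ∈ Ico 1 (2 * p), k :=
        Finset.prod_Ico_consecutive _ (by omega) (by omega)
      have hf1 : ∏ k ∈ Ico 1 (p + 1), k = Nat.factorial p :=
        Finset.prod_Ico_id_eq_factorial p
      have hf2 : ∏ k ∈ Ico 1 (2 * p), k = Nat.factorial (2 * p - 1) := by
        rw [show 2 * p = (2 * p - 1) + 1 by omega]
        exact Finset.prod_Ico_id_eq_factorial (2 * p - 1)
      rw [hA, hshift, show 1 + p = p + 1 by ring, show p + p = 2 * p by ring, ← hf1,
        mul_comm, hcons, hf2]
    exact Nat.eq_of_mul_eq_mul_right (Nat.factorial_pos p) (h1.trans h2.symm)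
  -- the rational difference as an integer over (p-1)!
  set D : ℤ := (∏ k ∈ Icc 1 (p - 1), (p + k) : ℕ) - (Nat.factorial (p - 1) : ℕ)
      - 2 * p * (∑ k ∈ Icc 1 (p - 1), Nat.factorial (p - 1) / k : ℕ) with hD
  have hCQ : ((Nat.choose (2 * p - 1) (p - 1)) : ℚ)
      = ((∏ k ∈ Icc 1 (p - 1), (p + k) : ℕ) : ℚ) / (Nat.factorial (p - 1) : ℚ) := by
    rw [eq_div_iff hN0]
    exact_mod_cast congrArg (Nat.cast : ℕ → ℚ) claim1
  have hHQ : (∑ k ∈ Finset.Icc 1 (p - 1), (1 : ℚ) / (k : ℚ))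
      = ((∑ k ∈ Icc 1 (p - 1), Nat.factorial (p - 1) / k : ℕ) : ℚ)
          / (Nat.factorial (p - 1) : ℚ) := by
    rw [Nat.cast_sum, Finset.sum_div]
    refine Finset.sum_congr rfl fun k hk => ?_
    simp only [mem_Icc] at hk
    have hk0 : (k : ℚ) ≠ 0 := by exact_mod_cast (by omega : k ≠ 0)
    have hdvd : k ∣ Nat.factorial (p - 1) := Nat.dvd_factorial (by omega) hk.2
    rw [Nat.cast_div hdvd hk0]
    field_simp
  have hdiff : ((Nat.choose (2 * p - 1) (p - 1)) : ℚ)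
      - (1 + 2 * (p : ℚ) * (∑ k ∈ Finset.Icc 1 (p - 1), (1 : ℚ) / (k : ℚ)))
      = (D : ℚ) / (Nat.factorial (p - 1) : ℚ) := by
    have hDQ : (D : ℚ) = ((∏ k ∈ Icc 1 (p - 1), (p + k) : ℕ) : ℚ)
        - ((Nat.factorial (p - 1) : ℕ) : ℚ)
        - 2 * (p : ℚ) * ((∑ k ∈ Icc 1 (p - 1), Nat.factorial (p - 1) / k : ℕ) : ℚ) := by
      rw [hD]
      simp only [Int.cast_sub, Int.cast_mul, Int.cast_natCast, Int.cast_ofNat, Int.cast_two]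
    rw [hCQ, hHQ, hDQ]
    field_simp
    ring
  -- divisibility
  have hdvdD : ((p ^ 5 : ℕ) : ℤ) ∣ D := by
    rw [← ZMod.intCast_zmod_eq_zero_iff_dvd, hD]
    simp only [Int.cast_sub, Int.cast_mul, Int.cast_natCast, Int.cast_ofNat, Int.cast_two]
    have := main_zmod p m hp h7 hpm
    linear_combination this
  unfold PadicCong
  rw [hdiff, padicNorm.div]
  have hnum : padicNorm p (D : ℚ) ≤ (p : ℚ) ^ (-(5 : ℤ)) := by
    have := (padicNorm.dvd_iff_norm_le (p := p) (n := 5) (z := D)).mp hdvdD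
    simpa using this
  have hden : padicNorm p ((Nat.factorial (p - 1) : ℕ) : ℚ) = 1 := by
    have : ¬ (p : ℤ) ∣ ((Nat.factorial (p - 1) : ℕ) : ℤ) := by
      rw [Int.natCast_dvd_natCast]
      intro hd
      have := (Nat.Prime.dvd_factorial hp).mp hd
      omega
    have h1 := (padicNorm.int_eq_one_iff (p := p) ((Nat.factorial (p - 1) : ℕ) : ℤ)).mpr this
    simpa using h1
  rw [hden, div_one]
  simpa using hnum
end

section
/- For any prime p ≥ 7, the binomial coefficient C(2p-1, p-1) ≡ 1 - p²·∑_{k=1}^{p-1} 1/k² (mod p⁵). -/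
open Finset

lemma aux_prod_one_add {R : Type*} [CommRing R] (a : ℕ → R)
    (h3 : ∀ x y z, a x * a y * a z = 0) (s : Finset ℕ) :
    2 * ∏ k ∈ s, (1 + a k) =
      2 + 2 * (∑ k ∈ s, a k) + (∑ k ∈ s, a k) ^ 2 - ∑ k ∈ s, (a k) ^ 2 := by
  have hS : ∀ (x : ℕ) (t : Finset ℕ),
      a x * ((∑ k ∈ t, a k) * (∑ k ∈ t, a k)) = 0 := by
    intro x t
    rw [Finset.sum_mul_sum, Finset.mul_sum]
    refine Finset.sum_eq_zero fun i _ => ?_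
    rw [Finset.mul_sum]
    refine Finset.sum_eq_zero fun j _ => ?_
    linear_combination h3 x i j
  have hQ : ∀ (x : ℕ) (t : Finset ℕ), a x * (∑ k ∈ t, (a k) ^ 2) = 0 := by
    intro x t
    rw [Finset.mul_sum]
    refine Finset.sum_eq_zero fun k _ => ?_
    linear_combination h3 x k k
  induction s using Finset.induction_on with
  | empty => simp
  | insert i t hi ih =>
    rw [Finset.prod_insert hi, Finset.sum_insert hi, Finset.sum_insert hi]
    linear_combination (1 + a i) * ih + hS i t - hQ i t

lemma aux_prod_Icc_fact (n : ℕ) : (∏ i ∈ Finset.Icc 1 n, i) = Nat.factorial n := by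
  rw [← Finset.Ico_add_one_right_eq_Icc, Finset.prod_Ico_id_eq_factorial]

lemma aux_prod_shift (p m : ℕ) :
    (∏ k ∈ Finset.Icc 1 m, (p + k)) * Nat.factorial p = Nat.factorial (p + m) := by
  induction m with
  | zero => simp
  | succ m ih =>
    rw [Finset.prod_Icc_succ_top (by omega : 1 ≤ m + 1), mul_right_comm, ih]
    have h : p + (m + 1) = (p + m) + 1 := by omega
    rw [h, Nat.factorial_succ, mul_comm]

lemma aux_prod_reflect (p : ℕ) :
    (∏ k ∈ Finset.Icc 1 (p - 1), (p - k)) = ∏ k ∈ Finset.Icc 1 (p - 1), k := by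
  refine Finset.prod_nbij' (fun k => p - k) (fun k => p - k) ?_ ?_ ?_ ?_ ?_ <;>
    intro k hk <;> simp only [Finset.mem_Icc] at * <;> omega

lemma aux_sum_Icc_cast (p : ℕ) [Fact p.Prime] {M : Type*} [AddCommMonoid M]
    (f : ZMod p → M) :
    (∑ k ∈ Finset.Icc 1 (p - 1), f ((k : ZMod p))) =
      ∑ x ∈ (Finset.univ : Finset (ZMod p)) \ {0}, f x := by
  have hp1 : 1 < p := (Fact.out : p.Prime).one_lt
  refine Finset.sum_nbij' (fun k => ((k : ZMod p))) (fun x => x.val) ?_ ?_ ?_ ?_ ?_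
  · intro k hk
    simp only [Finset.mem_Icc] at hk
    simp only [Finset.mem_sdiff, Finset.mem_univ, Finset.mem_singleton, true_and]
    intro h0
    rw [ZMod.natCast_eq_zero_iff] at h0
    have := Nat.le_of_dvd (by omega) h0
    omega
  · intro x hx
    simp only [Finset.mem_sdiff, Finset.mem_univ, Finset.mem_singleton, true_and] at hx
    have h1 : x.val < p := ZMod.val_lt x
    have h2 : x.val ≠ 0 := fun h => hx (by rwa [← ZMod.val_eq_zero])
    simp only [Finset.mem_Icc]
    omega
  · intro k hk
    simp only [Finset.mem_Icc] at hk
    exact ZMod.val_cast_of_lt (by omega)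
  · intro x _
    exact ZMod.natCast_rightInverse x
  · intro k _
    rfl

lemma aux_sum_inv_pow (p : ℕ) [Fact p.Prime] (j : ℕ) (hj0 : 0 < j) (hj : j < p - 1) :
    (∑ k ∈ Finset.Icc 1 (p - 1), (((k : ZMod p))⁻¹) ^ j) = 0 := by
  rw [aux_sum_Icc_cast p (fun x => (x⁻¹) ^ j)]
  have h1 : (∑ x ∈ (Finset.univ : Finset (ZMod p)) \ {0}, (x⁻¹) ^ j)
      = ∑ x ∈ (Finset.univ : Finset (ZMod p)) \ {0}, x ^ j := by
    refine Finset.sum_nbij' (fun x => x⁻¹) (fun x => x⁻¹) ?_ ?_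
      (fun x _ => inv_inv x) (fun x _ => inv_inv x) (fun x _ => rfl) <;>
      · intro x hx
        simp only [Finset.mem_sdiff, Finset.mem_univ, Finset.mem_singleton, true_and] at *
        exact inv_ne_zero hx
  rw [h1, Finset.sum_sdiff_eq_sub (Finset.subset_univ _), Finset.sum_singleton,
    zero_pow hj0.ne', sub_zero]
  have := FiniteField.sum_pow_lt_card_sub_one (K := ZMod p) j (by rw [ZMod.card]; exact hj)
  exact this

lemma aux_dvd_sum (p : ℕ) (hp : p.Prime) (j : ℕ) (hj0 : 0 < j) (hj : j < p - 1) :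
    (p : ℤ) ∣ ∑ k ∈ Finset.Icc 1 (p - 1),
      (∏ i ∈ (Finset.Icc 1 (p - 1)).erase k, (i : ℤ)) ^ j := by
  haveI := Fact.mk hp
  have hp1 : 1 < p := hp.one_lt
  rw [← ZMod.intCast_zmod_eq_zero_iff_dvd]
  push_cast
  have key : ∀ k ∈ Finset.Icc 1 (p - 1),
      (∏ i ∈ (Finset.Icc 1 (p - 1)).erase k, (i : ZMod p)) ^ j
        = ((Nat.factorial (p - 1) : ZMod p)) ^ j * (((k : ZMod p))⁻¹) ^ j := by
    intro k hk
    have hk' := Finset.mem_Icc.mp hk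
    have hk0 : (k : ZMod p) ≠ 0 := by
      intro h0
      rw [ZMod.natCast_eq_zero_iff] at h0
      have := Nat.le_of_dvd (by omega) h0
      omega
    have hfac : (k : ZMod p) * ∏ i ∈ (Finset.Icc 1 (p - 1)).erase k, (i : ZMod p)
        = ((Nat.factorial (p - 1) : ZMod p)) := by
      rw [Finset.mul_prod_erase _ _ hk, ← Nat.cast_prod, aux_prod_Icc_fact]
    have hprod : (∏ i ∈ (Finset.Icc 1 (p - 1)).erase k, (i : ZMod p))
        = ((Nat.factorial (p - 1) : ZMod p)) * ((k : ZMod p))⁻¹ := by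
      apply mul_left_cancel₀ hk0
      rw [hfac]
      field_simp
    rw [hprod, mul_pow]
  rw [Finset.sum_congr rfl key, ← Finset.mul_sum, aux_sum_inv_pow p j hj0 hj, mul_zero]

theorem stmt2 (p : ℕ) (hp : p.Prime) (h7 : 7 ≤ p) :
    PadicCong p 5 ((Nat.choose (2 * p - 1) (p - 1)) : ℚ) (1 - (p : ℚ) ^ 2 * (∑ k ∈ Finset.Icc 1 (p - 1), (1 : ℚ) / (k : ℚ) ^ 2)) := by
  haveI := Fact.mk hp
  set s : Finset ℕ := Finset.Icc 1 (p - 1) with hs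
  set C : ℕ := Nat.choose (2 * p - 1) (p - 1) with hCdef
  -- ℕ identity
  have hchoose : C * Nat.factorial (p - 1) * Nat.factorial p = Nat.factorial (2 * p - 1) := by
    have h1 : p - 1 ≤ 2 * p - 1 := by omega
    have h2 := Nat.choose_mul_factorial_mul_factorial h1
    rwa [(by omega : 2 * p - 1 - (p - 1) = p)] at h2
  have hprodN : (∏ k ∈ s, (p + k)) * Nat.factorial p = Nat.factorial (2 * p - 1) := by
    rw [hs, aux_prod_shift p (p - 1), (by omega : p + (p - 1) = 2 * p - 1)]
  have hmain : C * Nat.factorial (p - 1) = ∏ k ∈ s, (p + k) :=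
    Nat.eq_of_mul_eq_mul_right (Nat.factorial_pos p) (by rw [hchoose, hprodN])
  -- integers g k
  set g : ℕ → ℤ := fun k => ∏ i ∈ s.erase k, (i : ℤ) with hg
  have hkg : ∀ k ∈ s, (k : ℤ) * g k = (Nat.factorial (p - 1) : ℤ) := by
    intro k hk
    rw [hg]
    dsimp only
    rw [Finset.mul_prod_erase _ _ hk, ← Nat.cast_prod, aux_prod_Icc_fact]
  have hdvd2 : (p : ℤ) ∣ ∑ k ∈ s, g k ^ 2 := aux_dvd_sum p hp 2 (by norm_num) (by omega)
  have hdvd4 : (p : ℤ) ∣ ∑ k ∈ s, g k ^ 4 := aux_dvd_sum p hp 4 (by norm_num) (by omega)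
  -- move to R := ZMod (p^5)
  have hp5 : ((p : ZMod (p ^ 5))) ^ 5 = 0 := by
    have h := ZMod.natCast_self (p ^ 5)
    push_cast at h
    exact h
  set Fq : ZMod (p ^ 5) := (Nat.factorial (p - 1) : ZMod (p ^ 5)) with hFq
  set u : ℕ → ZMod (p ^ 5) := fun k => ((k : ZMod (p ^ 5)))⁻¹ with hu
  have hcop : ∀ k ∈ s, Nat.Coprime k (p ^ 5) := by
    intro k hk
    have hk' := Finset.mem_Icc.mp hk
    have hnd : ¬ p ∣ k := fun hd => by have := Nat.le_of_dvd (by omega) hd; omega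
    exact ((hp.coprime_iff_not_dvd.mpr hnd).symm).pow_right 5
  have huk : ∀ k ∈ s, (k : ZMod (p ^ 5)) * u k = 1 := fun k hk =>
    ZMod.coe_mul_inv_eq_one k (hcop k hk)
  have hFcop : Nat.Coprime (Nat.factorial (p - 1)) (p ^ 5) := by
    have hnd : ¬ p ∣ Nat.factorial (p - 1) := by
      rw [Nat.Prime.dvd_factorial hp]
      omega
    exact ((hp.coprime_iff_not_dvd.mpr hnd).symm).pow_right 5
  have hFunit : IsUnit Fq := by
    rw [hFq]
    exact (ZMod.isUnit_iff_coprime _ _).mpr hFcop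
  have h2unit : IsUnit (2 : ZMod (p ^ 5)) := by
    have hnd : ¬ p ∣ 2 := fun hd => by have := Nat.le_of_dvd (by norm_num) hd; omega
    have hc : Nat.Coprime 2 (p ^ 5) := ((hp.coprime_iff_not_dvd.mpr hnd).symm).pow_right 5
    have := (ZMod.isUnit_iff_coprime 2 (p ^ 5)).mpr hc
    simpa using this
  -- step 1 : C * Fq = ∏ (p + k)
  have hC1 : (C : ZMod (p ^ 5)) * Fq = ∏ k ∈ s, ((p : ZMod (p ^ 5)) + (k : ZMod (p ^ 5))) := by
    have h := congrArg (fun n : ℕ => (n : ZMod (p ^ 5))) hmain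
    push_cast at h
    exact h
  -- step 2 : ∏ (k - p) = Fq
  have hC2 : (∏ k ∈ s, ((k : ZMod (p ^ 5)) - (p : ZMod (p ^ 5)))) = Fq := by
    have hcongr : ∀ k ∈ s, (k : ZMod (p ^ 5)) - (p : ZMod (p ^ 5))
        = (-1) * (((p - k : ℕ) : ZMod (p ^ 5))) := by
      intro k hk
      have hk' := Finset.mem_Icc.mp hk
      have hle : k ≤ p := by omega
      rw [Nat.cast_sub hle]
      ring
    rw [Finset.prod_congr rfl hcongr, Finset.prod_mul_distrib, Finset.prod_const,
      ← Nat.cast_prod]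
    rw [hs, aux_prod_reflect p, aux_prod_Icc_fact]
    have hcard : s.card = p - 1 := by rw [hs, Nat.card_Icc]; omega
    rw [hcard]
    have heven : Even (p - 1) := by
      have hodd : Odd p := hp.odd_of_ne_two (by omega)
      obtain ⟨m, hm⟩ := hodd
      exact ⟨m, by omega⟩
    rw [heven.neg_one_pow, one_mul, hFq]
  -- step 3
  have hC3 : (C : ZMod (p ^ 5)) * Fq ^ 2
      = ∏ k ∈ s, ((k : ZMod (p ^ 5)) ^ 2 - (p : ZMod (p ^ 5)) ^ 2) := by
    have : (C : ZMod (p ^ 5)) * Fq ^ 2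
        = ((C : ZMod (p ^ 5)) * Fq) * (∏ k ∈ s, ((k : ZMod (p ^ 5)) - (p : ZMod (p ^ 5)))) := by
      rw [hC2]; ring
    rw [this, hC1, ← Finset.prod_mul_distrib]
    exact Finset.prod_congr rfl fun k _ => by ring
  -- the a function
  set a : ℕ → ZMod (p ^ 5) := fun k => -(p : ZMod (p ^ 5)) ^ 2 * (u k) ^ 2 with ha
  have h3 : ∀ x y z, a x * a y * a z = 0 := by
    intro x y z
    have h : a x * a y * a z
        = (p : ZMod (p ^ 5)) ^ 5 * (-(p : ZMod (p ^ 5)) * ((u x) ^ 2 * (u y) ^ 2 * (u z) ^ 2)) := by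
      rw [ha]; ring
    rw [h, hp5, zero_mul]
  have hexp := aux_prod_one_add a h3 s
  have hprod2 : (∏ k ∈ s, ((k : ZMod (p ^ 5)) ^ 2 - (p : ZMod (p ^ 5)) ^ 2))
      = Fq ^ 2 * ∏ k ∈ s, (1 + a k) := by
    have hcongr : ∀ k ∈ s, (k : ZMod (p ^ 5)) ^ 2 - (p : ZMod (p ^ 5)) ^ 2
        = (k : ZMod (p ^ 5)) ^ 2 * (1 + a k) := by
      intro k hk
      have h := huk k hk
      rw [ha]
      dsimp only
      linear_combination ((p : ZMod (p ^ 5)) ^ 2 * ((k : ZMod (p ^ 5)) * u k + 1)) * h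
    rw [Finset.prod_congr rfl hcongr, Finset.prod_mul_distrib]
    congr 1
    rw [Finset.prod_pow, ← Nat.cast_prod, hs, aux_prod_Icc_fact, ← hFq]
  -- sums of a
  have hsa : ∑ k ∈ s, a k = -(p : ZMod (p ^ 5)) ^ 2 * ∑ k ∈ s, (u k) ^ 2 := by
    rw [Finset.mul_sum]
  have hsa2 : ∑ k ∈ s, (a k) ^ 2 = (p : ZMod (p ^ 5)) ^ 4 * ∑ k ∈ s, (u k) ^ 4 := by
    rw [Finset.mul_sum]
    exact Finset.sum_congr rfl fun k _ => by rw [ha]; ring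
  -- relation Fq * u k = g k
  have hgu : ∀ k ∈ s, Fq * u k = ((g k : ℤ) : ZMod (p ^ 5)) := by
    intro k hk
    have h := huk k hk
    have hkgk : (k : ZMod (p ^ 5)) * ((g k : ℤ) : ZMod (p ^ 5)) = Fq := by
      have h2 := congrArg (fun z : ℤ => (z : ZMod (p ^ 5))) (hkg k hk)
      push_cast at h2
      rw [← hFq] at h2
      exact h2
    linear_combination (-(u k)) * hkgk + ((g k : ℤ) : ZMod (p ^ 5)) * h
  have hT2 : Fq ^ 2 * ∑ k ∈ s, (u k) ^ 2 = ((∑ k ∈ s, g k ^ 2 : ℤ) : ZMod (p ^ 5)) := by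
    push_cast
    rw [Finset.mul_sum]
    refine Finset.sum_congr rfl fun k hk => ?_
    have h2 := hgu k hk
    linear_combination (Fq * u k + ((g k : ℤ) : ZMod (p ^ 5))) * h2
  have hT4 : Fq ^ 4 * ∑ k ∈ s, (u k) ^ 4 = ((∑ k ∈ s, g k ^ 4 : ℤ) : ZMod (p ^ 5)) := by
    push_cast
    rw [Finset.mul_sum]
    refine Finset.sum_congr rfl fun k hk => ?_
    have h2 := hgu k hk
    linear_combination ((Fq * u k) ^ 3 + (Fq * u k) ^ 2 * ((g k : ℤ) : ZMod (p ^ 5))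
      + (Fq * u k) * ((g k : ℤ) : ZMod (p ^ 5)) ^ 2 + ((g k : ℤ) : ZMod (p ^ 5)) ^ 3) * h2
  -- divisibility kills the p⁴ terms
  obtain ⟨c2, hc2⟩ := hdvd2
  obtain ⟨c4, hc4⟩ := hdvd4
  have hc2' : ((∑ k ∈ s, g k ^ 2 : ℤ) : ZMod (p ^ 5)) = (p : ZMod (p ^ 5)) * ((c2 : ℤ) : ZMod (p ^ 5)) := by
    rw [hc2]; push_cast; ring
  have hc4' : ((∑ k ∈ s, g k ^ 4 : ℤ) : ZMod (p ^ 5)) = (p : ZMod (p ^ 5)) * ((c4 : ℤ) : ZMod (p ^ 5)) := by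
    rw [hc4]; push_cast; ring
  -- the key algebraic identity in ZMod (p^5)
  have hfin : 2 * Fq ^ 2 * ((C : ZMod (p ^ 5)) * Fq ^ 2 - Fq ^ 2
      + (p : ZMod (p ^ 5)) ^ 2 * ((∑ k ∈ s, g k ^ 2 : ℤ) : ZMod (p ^ 5))) = 0 := by
    have hCP : (C : ZMod (p ^ 5)) * Fq ^ 2 = Fq ^ 2 * ∏ k ∈ s, (1 + a k) := by
      rw [hC3, hprod2]
    rw [hsa, hsa2] at hexp
    have hz2 : (p : ZMod (p ^ 5)) ^ 4 * ((∑ k ∈ s, g k ^ 2 : ℤ) : ZMod (p ^ 5)) ^ 2 = 0 := by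
      rw [hc2']
      have h : (p : ZMod (p ^ 5)) ^ 4 * ((p : ZMod (p ^ 5)) * ((c2 : ℤ) : ZMod (p ^ 5))) ^ 2
          = (p : ZMod (p ^ 5)) ^ 5 * ((p : ZMod (p ^ 5)) * ((c2 : ℤ) : ZMod (p ^ 5)) ^ 2) := by
        ring
      rw [h, hp5, zero_mul]
    have hz4 : (p : ZMod (p ^ 5)) ^ 4 * ((∑ k ∈ s, g k ^ 4 : ℤ) : ZMod (p ^ 5)) = 0 := by
      rw [hc4']
      have h : (p : ZMod (p ^ 5)) ^ 4 * ((p : ZMod (p ^ 5)) * ((c4 : ℤ) : ZMod (p ^ 5)))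
          = (p : ZMod (p ^ 5)) ^ 5 * ((c4 : ℤ) : ZMod (p ^ 5)) := by
        ring
      rw [h, hp5, zero_mul]
    linear_combination 2 * Fq ^ 2 * hCP + Fq ^ 4 * hexp
      + (-2 * (p : ZMod (p ^ 5)) ^ 2 * Fq ^ 2
          + (p : ZMod (p ^ 5)) ^ 4 * (Fq ^ 2 * (∑ k ∈ s, (u k) ^ 2)
            + ((∑ k ∈ s, g k ^ 2 : ℤ) : ZMod (p ^ 5)))) * hT2
      - (p : ZMod (p ^ 5)) ^ 4 * hT4 + hz2 - hz4
  -- cancel the unit 2 * Fq^2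
  have hKey : (C : ZMod (p ^ 5)) * Fq ^ 2 - Fq ^ 2
      + (p : ZMod (p ^ 5)) ^ 2 * ((∑ k ∈ s, g k ^ 2 : ℤ) : ZMod (p ^ 5)) = 0 :=
    ((h2unit.mul (hFunit.pow 2)).mul_right_eq_zero).mp hfin
  -- the integer M
  set Mint : ℤ := (Nat.factorial (p - 1) : ℤ) ^ 2 * ((C : ℤ) - 1)
      + (p : ℤ) ^ 2 * ∑ k ∈ s, g k ^ 2 with hMdef
  have hMzero : ((Mint : ℤ) : ZMod (p ^ 5)) = 0 := by
    have hKey' := hKey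
    push_cast at hKey'
    rw [hMdef]
    push_cast
    rw [← hFq]
    linear_combination hKey'
  have hdvdM : ((p : ℤ)) ^ 5 ∣ Mint := by
    have h := (ZMod.intCast_zmod_eq_zero_iff_dvd Mint (p ^ 5)).mp hMzero
    exact_mod_cast h
  -- back to ℚ
  unfold PadicCong
  have hfqz : (Nat.factorial (p - 1) : ℚ) ≠ 0 := Nat.cast_ne_zero.mpr (Nat.factorial_ne_zero _)
  have hD : ((C : ℚ)) - (1 - (p : ℚ) ^ 2 * ∑ k ∈ Finset.Icc 1 (p - 1), (1 : ℚ) / (k : ℚ) ^ 2)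
      = (Mint : ℚ) / ((Nat.factorial (p - 1) : ℚ)) ^ 2 := by
    rw [eq_div_iff (pow_ne_zero 2 hfqz), hMdef]
    have hsum : (∑ k ∈ s, (1 : ℚ) / (k : ℚ) ^ 2) * ((Nat.factorial (p - 1) : ℚ)) ^ 2
        = ∑ k ∈ s, ((g k : ℤ) : ℚ) ^ 2 := by
      rw [Finset.sum_mul]
      refine Finset.sum_congr rfl fun k hk => ?_
      have hk' := Finset.mem_Icc.mp hk
      have hkne : (k : ℚ) ≠ 0 := Nat.cast_ne_zero.mpr (by omega)
      have h := congrArg (fun z : ℤ => (z : ℚ)) (hkg k hk)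
      push_cast at h
      field_simp
      linear_combination (-((k : ℚ) * ((g k : ℤ) : ℚ) + (Nat.factorial (p - 1) : ℚ))) * h
    push_cast
    linear_combination (p : ℚ) ^ 2 * hsum
  rw [hD, padicNorm.div]
  have hnorm1 : padicNorm p (((Nat.factorial (p - 1) : ℚ)) ^ 2) = 1 := by
    have hcast : ((Nat.factorial (p - 1) : ℚ)) ^ 2 = ((Nat.factorial (p - 1) ^ 2 : ℕ) : ℚ) := by
      push_cast
      ring
    rw [hcast, padicNorm.nat_eq_one_iff]
    intro hdvd
    have h := hp.dvd_of_dvd_pow hdvd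
    rw [Nat.Prime.dvd_factorial hp] at h
    omega
  rw [hnorm1, div_one]
  have hfin2 := (padicNorm.dvd_iff_norm_le (p := p) (n := 5) (z := Mint)).mp
    (by exact_mod_cast hdvdM)
  convert hfin2 using 2
end

section
/- For a prime p ≥ 7, the congruence C(2p-1, p-1) ≡ 1 (mod p⁴) holds if and only if ∑_{k=1}^{p-1} 1/k² ≡ 0 (mod p²). -/
open Finset


/-- ultrametric bridge -/
lemma wp_bridge {p : ℕ} [Fact p.Prime] {x y ε : ℚ} (h : padicNorm p (x - y) ≤ ε) :
    padicNorm p x ≤ ε ↔ padicNorm p y ≤ ε := by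
  constructor
  · intro hx
    have hy : y = x - (x - y) := by ring
    rw [hy]
    exact le_trans (padicNorm.sub) (max_le hx h)
  · intro hy
    have hx : x = y + (x - y) := by ring
    rw [hx]
    exact le_trans (padicNorm.nonarchimedean) (max_le hy h)

lemma wp_prod_fact (p : ℕ) : ∀ n : ℕ,
    (∏ k ∈ Icc 1 n, (p + k)) * Nat.factorial p = Nat.factorial (p + n)
  | 0 => by simp
  | (n+1) => by
    rw [Finset.prod_Icc_succ_top (by omega : 1 ≤ n + 1)]
    have ih := wp_prod_fact p n
    have h2 : p + (n+1) = (p + n) + 1 := by omega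
    rw [h2, Nat.factorial_succ, ← ih]
    ring

lemma wp_prod_id (n : ℕ) : (∏ k ∈ Icc 1 n, k) = Nat.factorial n := by
  have := wp_prod_fact 0 n
  simpa using this

/-- the choose number as a product, in ℕ -/
lemma wp_choose_prod (p : ℕ) (hp : 1 ≤ p) :
    (∏ k ∈ Icc 1 (p-1), (p + k)) = Nat.choose (2*p-1) (p-1) * Nat.factorial (p-1) := by
  have h1 : (p - 1) ≤ 2*p - 1 := by omega
  have h2 : (2*p-1) - (p-1) = p := by omega
  have h3 := Nat.choose_mul_factorial_mul_factorial h1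
  rw [h2] at h3
  have h4 := wp_prod_fact p (p-1)
  have h5 : p + (p - 1) = 2*p - 1 := by omega
  rw [h5] at h4
  have h6 : (∏ k ∈ Icc 1 (p-1), (p + k)) * Nat.factorial p
      = Nat.choose (2*p-1) (p-1) * Nat.factorial (p-1) * Nat.factorial p := by rw [h3, h4]
  exact Nat.eq_of_mul_eq_mul_right (Nat.factorial_pos p) h6

/-- reflection of sums over Icc 1 (p-1) -/
lemma wp_sum_reflect (p : ℕ) (f : ℕ → ℚ) :
    ∑ k ∈ Icc 1 (p-1), f k = ∑ k ∈ Icc 1 (p-1), f (p - k) := by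
  refine Finset.sum_bij' (fun k _ => p - k) (fun k _ => p - k) ?_ ?_ ?_ ?_ ?_ <;>
    intro a ha <;> simp only [Finset.mem_Icc] at ha ⊢
  · omega
  · omega
  · omega
  · omega
  · rw [Nat.sub_sub_self (by omega)]

lemma wp_prod_reflect (p : ℕ) (f : ℕ → ℚ) :
    ∏ k ∈ Icc 1 (p-1), f k = ∏ k ∈ Icc 1 (p-1), f (p - k) := by
  refine Finset.prod_bij' (fun k _ => p - k) (fun k _ => p - k) ?_ ?_ ?_ ?_ ?_ <;>
    intro a ha <;> simp only [Finset.mem_Icc] at ha ⊢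
  · omega
  · omega
  · omega
  · omega
  · rw [Nat.sub_sub_self (by omega)]

/-- first/second order expansion bound for products of (1 + small) -/
lemma wp_expand (p : ℕ) [Fact p.Prime] (c : ℚ) (hc0 : 0 ≤ c) (hc1 : c ≤ 1)
    (s : Finset ℕ) (f : ℕ → ℚ) :
    (∀ k ∈ s, padicNorm p (f k) ≤ c) →
    padicNorm p (∏ k ∈ s, (1 + f k) - 1) ≤ c ∧
    padicNorm p (∏ k ∈ s, (1 + f k) - 1 - ∑ k ∈ s, f k) ≤ c * c := by
  classical
  induction s using Finset.induction_on with
  | empty =>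
    intro _
    simpa using ⟨hc0, mul_nonneg hc0 hc0⟩
  | insert a s' ha ih =>
    intro hf
    obtain ⟨ih1, ih2⟩ := ih (fun k hk => hf k (Finset.mem_insert_of_mem hk))
    have hfa : padicNorm p (f a) ≤ c := hf a (Finset.mem_insert_self a s')
    set P := ∏ k ∈ s', (1 + f k) with hP
    set S := ∑ k ∈ s', f k with hS
    have hPle : padicNorm p P ≤ 1 := by
      have e : P = (P - 1) + 1 := by ring
      rw [e]
      exact le_trans padicNorm.nonarchimedean
        (max_le (le_trans ih1 hc1) (le_of_eq padicNorm.one))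
    rw [Finset.prod_insert ha, Finset.sum_insert ha]
    constructor
    · have e1 : (1 + f a) * P - 1 = (P - 1) + f a * P := by ring
      rw [e1]
      refine le_trans padicNorm.nonarchimedean (max_le ih1 ?_)
      rw [padicNorm.mul]
      calc padicNorm p (f a) * padicNorm p P ≤ c * 1 :=
            mul_le_mul hfa hPle (padicNorm.nonneg _) hc0
        _ = c := mul_one c
    · have e2 : (1 + f a) * P - 1 - (f a + S) = (P - 1 - S) + f a * (P - 1) := by ring
      rw [e2]
      refine le_trans padicNorm.nonarchimedean (max_le ih2 ?_)
      rw [padicNorm.mul]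
      exact mul_le_mul hfa ih1 (padicNorm.nonneg _) hc0


set_option maxHeartbeats 1000000 in
theorem stmt4 (p : ℕ) (hp : p.Prime) (h7 : 7 ≤ p) :
    PadicCong p 4 ((Nat.choose (2 * p - 1) (p - 1)) : ℚ) 1 ↔ PadicCong p 2 (∑ k ∈ Finset.Icc 1 (p - 1), (1 : ℚ) / (k : ℚ) ^ 2) 0 := by
  haveI : Fact p.Prime := ⟨hp⟩
  have hq0 : (0:ℚ) < p := by exact_mod_cast hp.pos
  have hq1 : (1:ℚ) < p := by exact_mod_cast hp.one_lt
  set ε : ℚ := (p:ℚ)⁻¹ with hε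
  have hε0 : 0 < ε := inv_pos.mpr hq0
  have hε1 : ε < 1 := by
    rw [hε, inv_lt_one_iff₀]; right; exact hq1
  have hnp : padicNorm p (p:ℚ) = ε := padicNorm.padicNorm_p_of_prime
  have hn2 : padicNorm p (2:ℚ) = 1 := by
    have h := (padicNorm.nat_eq_one_iff (p := p) 2).mpr
      (fun h => by have := Nat.le_of_dvd (by norm_num) h; omega)
    simpa using h
  have hn2p2 : padicNorm p (2*(p:ℚ)^2) = ε^2 := by
    have e : 2*(p:ℚ)^2 = 2 * ((p:ℚ) * (p:ℚ)) := by ring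
    rw [e, padicNorm.mul, padicNorm.mul, hnp, hn2, one_mul, sq]
  have hpow : ∀ (x:ℚ) (n:ℕ), padicNorm p (x^n) = (padicNorm p x)^n := by
    intro x n
    induction n with
    | zero => simp [padicNorm.one]
    | succ n ih => rw [pow_succ, pow_succ, padicNorm.mul, ih]
  -- unit facts
  have hnormk : ∀ k ∈ Icc 1 (p-1), padicNorm p (k:ℚ) = 1 := by
    intro k hk
    rw [Finset.mem_Icc] at hk
    rw [padicNorm.nat_eq_one_iff]
    intro hd
    have := Nat.le_of_dvd (by omega) hd
    omega
  have hcastpk : ∀ k ∈ Icc 1 (p-1), ((p - k : ℕ) : ℚ) = (p:ℚ) - k := by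
    intro k hk
    rw [Finset.mem_Icc] at hk
    exact_mod_cast Nat.cast_sub (by omega : k ≤ p)
  have hmempk : ∀ k ∈ Icc 1 (p-1), (p - k) ∈ Icc 1 (p-1) := by
    intro k hk
    rw [Finset.mem_Icc] at hk ⊢
    omega
  have hnormpk : ∀ k ∈ Icc 1 (p-1), padicNorm p ((p:ℚ) - k) = 1 := by
    intro k hk
    rw [← hcastpk k hk]
    exact hnormk _ (hmempk k hk)
  have hk0 : ∀ k ∈ Icc 1 (p-1), (k:ℚ) ≠ 0 := by
    intro k hk
    rw [Finset.mem_Icc] at hk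
    exact_mod_cast (by omega : k ≠ 0)
  have hpk0 : ∀ k ∈ Icc 1 (p-1), (p:ℚ) - (k:ℚ) ≠ 0 := by
    intro k hk
    have h1 := hcastpk k hk
    have h2 := hmempk k hk
    rw [Finset.mem_Icc] at h2
    rw [← h1]
    exact_mod_cast (by omega : p - k ≠ 0)
  set C : ℚ := ((Nat.choose (2*p-1) (p-1) : ℕ) : ℚ) with hCdef
  set B : ℚ := ∑ k ∈ Finset.Icc 1 (p-1), (1 : ℚ) / (k : ℚ) ^ 2 with hBdef
  set W : ℚ := ∑ k ∈ Icc 1 (p-1), 1/((k:ℚ) * ((p:ℚ) - k)) with hWdef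
  set P3 : ℚ := ∑ k ∈ Icc 1 (p-1), 1/(k:ℚ)^3 with hP3def
  set U : ℚ := ∑ k ∈ Icc 1 (p-1), 1/((k:ℚ)^3 * ((p:ℚ) - k)) with hUdef
  -- Step A : C as a product
  have hC : C = ∏ k ∈ Icc 1 (p-1), (1 + (p:ℚ)/(k:ℚ)) := by
    have e1 : ∏ k ∈ Icc 1 (p-1), (1 + (p:ℚ)/(k:ℚ))
        = (∏ k ∈ Icc 1 (p-1), ((p:ℚ)+(k:ℚ))) / (∏ k ∈ Icc 1 (p-1), (k:ℚ)) := by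
      rw [← Finset.prod_div_distrib]
      refine Finset.prod_congr rfl (fun k hk => ?_)
      have h0 := hk0 k hk
      field_simp
      ring
    have e2 : (∏ k ∈ Icc 1 (p-1), ((p:ℚ)+(k:ℚ)))
        = ((Nat.choose (2*p-1) (p-1) * Nat.factorial (p-1) : ℕ) : ℚ) := by
      rw [← wp_choose_prod p (by omega)]
      push_cast
      rfl
    have e3 : (∏ k ∈ Icc 1 (p-1), (k:ℚ)) = ((Nat.factorial (p-1) : ℕ) : ℚ) := by
      rw [← wp_prod_id (p-1)]
      push_cast
      rfl
    rw [e1, e2, e3, hCdef]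
    have hfne : ((Nat.factorial (p-1) : ℕ) : ℚ) ≠ 0 := by
      exact_mod_cast (Nat.factorial_pos (p-1)).ne'
    push_cast
    field_simp
  -- Step C1 : C ≡ 1 mod p
  have hE1 : padicNorm p (C - 1) ≤ ε := by
    have hf : ∀ k ∈ Icc 1 (p-1), padicNorm p ((p:ℚ)/(k:ℚ)) ≤ ε := by
      intro k hk
      rw [padicNorm.div, hnp, hnormk k hk, div_one]
    have := (wp_expand p ε (le_of_lt hε0) (le_of_lt hε1) _ _ hf).1
    rwa [← hC] at this
  -- Step F : norm of C + 1 is 1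
  have hCp1 : padicNorm p (C + 1) = 1 := by
    have hle : padicNorm p (C + 1) ≤ 1 := by
      have e : C + 1 = ((Nat.choose (2*p-1) (p-1) + 1 : ℕ) : ℚ) := by
        rw [hCdef]; push_cast; ring
      rw [e]
      exact padicNorm.of_nat _
    have hge : (1:ℚ) ≤ padicNorm p (C + 1) := by
      have e : (2:ℚ) = (C + 1) - (C - 1) := by ring
      have h := padicNorm.sub (p := p) (q := C + 1) (r := C - 1)
      rw [← e, hn2] at h
      rcases le_max_iff.mp h with h' | h'
      · exact h'
      · linarith
    linarith
  -- Step B : C^2 as a product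
  have hCrefl : C = ∏ k ∈ Icc 1 (p-1), (1 + (p:ℚ)/(((p - k : ℕ)):ℚ)) := by
    rw [hC]
    exact wp_prod_reflect p (fun k => 1 + (p:ℚ)/(k:ℚ))
  have hCsq : C^2 = ∏ k ∈ Icc 1 (p-1), (1 + 2*(p:ℚ)^2 * (1/((k:ℚ) * ((p:ℚ) - k)))) := by
    have e : C^2 = ∏ k ∈ Icc 1 (p-1),
        ((1 + (p:ℚ)/(k:ℚ)) * (1 + (p:ℚ)/(((p - k : ℕ)):ℚ))) := by
      rw [Finset.prod_mul_distrib, ← hC, ← hCrefl, sq]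
    rw [e]
    refine Finset.prod_congr rfl (fun k hk => ?_)
    rw [hcastpk k hk]
    have h1 := hk0 k hk
    have h2 := hpk0 k hk
    field_simp
    ring
  -- Step C2 : second order expansion of C^2
  have hE2 : padicNorm p (C^2 - 1 - 2*(p:ℚ)^2 * W) ≤ ε^4 := by
    have hf : ∀ k ∈ Icc 1 (p-1),
        padicNorm p (2*(p:ℚ)^2 * (1/((k:ℚ) * ((p:ℚ) - k)))) ≤ ε^2 := by
      intro k hk
      rw [padicNorm.mul, hn2p2, padicNorm.div, padicNorm.mul, padicNorm.one,
        hnormk k hk, hnormpk k hk]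
      norm_num
    have hε2le : ε^2 ≤ 1 := by nlinarith
    have h := (wp_expand p (ε^2) (by positivity) hε2le _ _ hf).2
    rw [← hCsq, ← Finset.mul_sum, ← hWdef] at h
    calc padicNorm p (C^2 - 1 - 2*(p:ℚ)^2 * W) ≤ ε^2 * ε^2 := h
      _ = ε^4 := by ring
  -- Step E : sum of 1/k^3 is ≡ 0 mod p
  have hP3 : padicNorm p P3 ≤ ε := by
    have hrefl : P3 = ∑ k ∈ Icc 1 (p-1), 1/(((p - k : ℕ)):ℚ)^3 :=
      wp_sum_reflect p (fun k => 1/(k:ℚ)^3)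
    have h2P3 : 2 * P3 = ∑ k ∈ Icc 1 (p-1), ((1:ℚ)/(k:ℚ)^3 + 1/(((p - k : ℕ)):ℚ)^3) := by
      rw [Finset.sum_add_distrib, ← hrefl, ← hP3def]
      ring
    have hbound : padicNorm p (2 * P3) ≤ ε := by
      rw [h2P3]
      refine padicNorm.sum_le' (fun k hk => ?_) (le_of_lt hε0)
      set m : ℤ := (k:ℤ)^2 - (k:ℤ)*((p:ℤ)-(k:ℤ)) + ((p:ℤ)-(k:ℤ))^2 with hm
      have hterm : (1:ℚ)/(k:ℚ)^3 + 1/(((p - k : ℕ)):ℚ)^3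
          = (p:ℚ) * ((m:ℚ) * (1/((k:ℚ)^3 * ((p:ℚ)-(k:ℚ))^3))) := by
        rw [hcastpk k hk]
        have h1 := hk0 k hk
        have h2 := hpk0 k hk
        rw [hm]
        push_cast
        field_simp
        ring
      have hden : padicNorm p (1/((k:ℚ)^3 * ((p:ℚ)-(k:ℚ))^3)) = 1 := by
        rw [padicNorm.div, padicNorm.one, padicNorm.mul, hpow, hpow,
          hnormk k hk, hnormpk k hk]
        norm_num
      rw [hterm, padicNorm.mul, padicNorm.mul, hnp, hden, mul_one]
      have h1 := padicNorm.of_int (p := p) m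
      have h2 := padicNorm.nonneg (p := p) ((m:ℤ):ℚ)
      nlinarith
    rw [padicNorm.mul, hn2, one_mul] at hbound
    exact hbound
  -- Step D : W + B ≡ 0 mod p^2
  have hU1 : padicNorm p U ≤ 1 := by
    refine padicNorm.sum_le' (fun k hk => ?_) zero_le_one
    rw [padicNorm.div, padicNorm.one, padicNorm.mul, hpow, hnormk k hk, hnormpk k hk]
    norm_num
  have hWB : padicNorm p (W + B) ≤ ε^2 := by
    have e : W + B = (-(p:ℚ)) * P3 + (p:ℚ)^2 * U := by
      rw [hWdef, hBdef, hP3def, hUdef, Finset.mul_sum, Finset.mul_sum,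
        ← Finset.sum_add_distrib, ← Finset.sum_add_distrib]
      refine Finset.sum_congr rfl (fun k hk => ?_)
      have h1 := hk0 k hk
      have h2 := hpk0 k hk
      field_simp
      ring
    rw [e]
    refine le_trans padicNorm.nonarchimedean (max_le ?_ ?_)
    · rw [padicNorm.mul, padicNorm.neg, hnp, sq]
      exact mul_le_mul_of_nonneg_left hP3 (le_of_lt hε0)
    · rw [padicNorm.mul, sq, padicNorm.mul, hnp, ← sq]
      calc ε^2 * padicNorm p U ≤ ε^2 * 1 :=
            mul_le_mul_of_nonneg_left hU1 (by positivity)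
        _ = ε^2 := mul_one _
  -- assemble
  have hG : padicNorm p (C^2 - 1) = padicNorm p (C - 1) := by
    have e : C^2 - 1 = (C - 1) * (C + 1) := by ring
    rw [e, padicNorm.mul, hCp1, mul_one]
  have hbridge2 : padicNorm p ((2*(p:ℚ)^2 * W) - (-(2*(p:ℚ)^2 * B))) ≤ ε^4 := by
    have e : (2*(p:ℚ)^2 * W) - (-(2*(p:ℚ)^2 * B)) = 2*(p:ℚ)^2 * (W + B) := by ring
    rw [e, padicNorm.mul, hn2p2]
    calc ε^2 * padicNorm p (W + B) ≤ ε^2 * ε^2 :=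
          mul_le_mul_of_nonneg_left hWB (by positivity)
      _ = ε^4 := by ring
  have hexp4 : (p:ℚ) ^ (-((4:ℕ):ℤ)) = ε^4 := by
    rw [zpow_neg, hε, inv_pow]
    norm_cast
  have hexp2 : (p:ℚ) ^ (-((2:ℕ):ℤ)) = ε^2 := by
    rw [zpow_neg, hε, inv_pow]
    norm_cast
  show padicNorm p (C - 1) ≤ (p:ℚ) ^ (-((4:ℕ):ℤ)) ↔ padicNorm p (B - 0) ≤ (p:ℚ) ^ (-((2:ℕ):ℤ))
  rw [sub_zero, hexp4, hexp2, ← hG]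
  calc padicNorm p (C^2 - 1) ≤ ε^4
      ↔ padicNorm p (2*(p:ℚ)^2 * W) ≤ ε^4 := wp_bridge hE2
    _ ↔ padicNorm p (-(2*(p:ℚ)^2 * B)) ≤ ε^4 := wp_bridge hbridge2
    _ ↔ padicNorm p B ≤ ε^2 := by
        rw [padicNorm.neg, padicNorm.mul, hn2p2]
        have h4 : ε^4 = ε^2 * ε^2 := by ring
        rw [h4]
        exact mul_le_mul_iff_of_pos_left (by positivity)
end

section
/- For any prime p ≥ 5 and any positive integer n ≤ p-3, the sum R_n(p) = ∑_{k=1}^{p-1} 1/k^n satisfies R_n(p) ≡ 0 (mod p²) if n is odd, and R_n(p) ≡ 0 (mod p) if n is even. -/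
open Finset

/-- Binomial expansion modulo squares: if `b * b = 0` then
`(a + b)^(n+1) = a^(n+1) + (n+1) * a^n * b`. -/
lemma sq_zero_add_pow {R : Type*} [CommRing R] (a b : R) (hb : b * b = 0) (n : ℕ) :
    (a + b) ^ (n + 1) = a ^ (n + 1) + ((n + 1 : ℕ) : R) * a ^ n * b := by
  induction n with
  | zero => push_cast; ring
  | succ m ih =>
      have h : (a + b) ^ (m + 1 + 1) = (a + b) ^ (m + 1) * (a + b) := by ring
      rw [h, ih]
      push_cast
      linear_combination ((m : R) + 1) * a ^ m * hb

lemma sum_inv_pow_zmod (p : ℕ) (hp : p.Prime) (n : ℕ) (hn : 1 ≤ n) (hlt : n < p - 1) :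
    ∑ k ∈ Finset.Icc 1 (p - 1), ((k : ZMod p)⁻¹) ^ n = 0 := by
  haveI : Fact p.Prime := ⟨hp⟩
  have hp2 : 2 ≤ p := hp.two_le
  have h0 : (Finset.range p) = insert 0 (Finset.Icc 1 (p - 1)) := by
    ext x; simp only [Finset.mem_range, Finset.mem_insert, Finset.mem_Icc]; omega
  have h1 : ∑ k ∈ Finset.Icc 1 (p - 1), ((k : ZMod p)⁻¹) ^ n
      = ∑ k ∈ Finset.range p, ((k : ZMod p)⁻¹) ^ n := by
    rw [h0, Finset.sum_insert (by simp)]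
    simp [zero_pow (by omega : n ≠ 0)]
  have h2 : ∑ k ∈ Finset.range p, ((k : ZMod p)⁻¹) ^ n = ∑ x : ZMod p, (x⁻¹) ^ n := by
    refine Finset.sum_nbij' (i := fun k => (k : ZMod p)) (j := fun x => x.val) ?_ ?_ ?_ ?_ ?_
    · intro a _; exact Finset.mem_univ _
    · intro x _; exact Finset.mem_range.mpr (ZMod.val_lt x)
    · intro a ha; exact ZMod.val_cast_of_lt (Finset.mem_range.mp ha)
    · intro x _; exact ZMod.natCast_zmod_val x
    · intro a _; rfl
  have h3 : ∑ x : ZMod p, (x⁻¹) ^ n = ∑ x : ZMod p, x ^ n :=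
    Fintype.sum_bijective Inv.inv inv_involutive.bijective _ _ (fun x => rfl)
  rw [h1, h2, h3]
  exact FiniteField.sum_pow_lt_card_sub_one (K := ZMod p) n (by rw [ZMod.card]; exact hlt)

lemma key_reduction (p : ℕ) (hp : p.Prime) (m n : ℕ) (hn : 1 ≤ n)
    (hT : ∑ k ∈ Finset.Icc 1 (p - 1), ((k : ZMod (p ^ m))⁻¹) ^ n = 0) :
    padicNorm p (∑ k ∈ Finset.Icc 1 (p - 1), (1 : ℚ) / (k : ℚ) ^ n) ≤ (p : ℚ) ^ (-(m : ℤ)) := by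
  haveI : Fact p.Prime := ⟨hp⟩
  set F := (p - 1).factorial with hF
  set S := ∑ k ∈ Finset.Icc 1 (p - 1), (1 : ℚ) / (k : ℚ) ^ n with hS
  set N : ℤ := ∑ k ∈ Finset.Icc 1 (p - 1), ((F / k : ℕ) : ℤ) ^ n with hN
  have hdvdF : ∀ k ∈ Finset.Icc 1 (p - 1), k ∣ F := by
    intro k hk
    rw [Finset.mem_Icc] at hk
    exact Nat.dvd_factorial (by omega) hk.2
  have hclear : ((F : ℚ)) ^ n * S = (N : ℚ) := by
    rw [hS, Finset.mul_sum, hN]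
    simp only [Int.cast_sum, Int.cast_pow, Int.cast_natCast]
    apply Finset.sum_congr rfl
    intro k hk
    have hdvd : k ∣ F := hdvdF k hk
    rw [Finset.mem_Icc] at hk
    have hk0' : (k : ℚ) ≠ 0 := Nat.cast_ne_zero.mpr (by omega)
    have hcast : ((F / k : ℕ) : ℚ) = (F : ℚ) / (k : ℚ) := Nat.cast_div hdvd hk0'
    rw [hcast, div_pow, mul_one_div]
  have hFnd : ¬ (p : ℤ) ∣ (F : ℤ) ^ n := by
    intro h
    have h1 : (p : ℤ) ∣ (F : ℤ) := (Nat.prime_iff_prime_int.mp hp).dvd_of_dvd_pow h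
    have h2 : p ∣ F := Int.natCast_dvd_natCast.mp h1
    have h3 := (Nat.Prime.dvd_factorial hp).mp h2
    have h4 := hp.two_le
    omega
  have hnormF : padicNorm p ((F : ℚ) ^ n) = 1 := by
    have : ((F : ℚ) ^ n) = (((F : ℤ) ^ n : ℤ) : ℚ) := by push_cast; ring
    rw [this]
    exact (padicNorm.int_eq_one_iff _).mpr hFnd
  have hnorm : padicNorm p (N : ℚ) = padicNorm p S := by
    rw [← hclear, padicNorm.mul, hnormF, one_mul]
  rw [← hnorm]
  apply padicNorm.dvd_iff_norm_le.mp
  rw [← ZMod.intCast_zmod_eq_zero_iff_dvd]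
  have hNz : ((N : ℤ) : ZMod (p ^ m)) = 0 := by
    rw [hN]
    simp only [Int.cast_sum, Int.cast_pow, Int.cast_natCast]
    have hcong : ∀ k ∈ Finset.Icc 1 (p - 1),
        (((F / k : ℕ) : ZMod (p ^ m))) ^ n
          = ((F : ZMod (p ^ m)) * ((k : ZMod (p ^ m))⁻¹)) ^ n := by
      intro k hk
      congr 1
      have hdvd : k ∣ F := hdvdF k hk
      rw [Finset.mem_Icc] at hk
      have hndvd : ¬ p ∣ k := by
        intro h
        have := Nat.le_of_dvd (by omega) h
        omega
      have hcop : Nat.Coprime k (p ^ m) :=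
        (Nat.coprime_comm.mp ((hp.coprime_iff_not_dvd).mpr hndvd)).pow_right m
      have hu : IsUnit (k : ZMod (p ^ m)) := (ZMod.isUnit_iff_coprime k (p ^ m)).mpr hcop
      have hki : (k : ZMod (p ^ m)) * (k : ZMod (p ^ m))⁻¹ = 1 := ZMod.mul_inv_of_unit _ hu
      have hdm : ((F / k : ℕ) : ZMod (p ^ m)) * (k : ZMod (p ^ m)) = (F : ZMod (p ^ m)) := by
        rw [← Nat.cast_mul, Nat.div_mul_cancel hdvd]
      linear_combination ((k : ZMod (p ^ m))⁻¹) * hdm - ((F / k : ℕ) : ZMod (p ^ m)) * hki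
    rw [Finset.sum_congr rfl hcong]
    simp only [mul_pow]
    rw [← Finset.mul_sum, hT, mul_zero]
  exact_mod_cast hNz

lemma sum_inv_pow_zmodsq (p : ℕ) (hp : p.Prime) (h5 : 5 ≤ p) (n : ℕ) (hn : 1 ≤ n)
    (hodd : Odd n) (hnp : n ≤ p - 3) :
    ∑ k ∈ Finset.Icc 1 (p - 1), ((k : ZMod (p ^ 2))⁻¹) ^ n = 0 := by
  haveI : Fact p.Prime := ⟨hp⟩
  have hP : (p : ZMod (p ^ 2)) * (p : ZMod (p ^ 2)) = 0 := by
    rw [← Nat.cast_mul, ← pow_two, ZMod.natCast_self]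
  have hunit : ∀ k, 1 ≤ k → k ≤ p - 1 →
      (k : ZMod (p ^ 2)) * (k : ZMod (p ^ 2))⁻¹ = 1 := by
    intro k hk1 hk2
    have hndvd : ¬ p ∣ k := by
      intro h
      have := Nat.le_of_dvd (by omega) h
      omega
    have hcop : Nat.Coprime k (p ^ 2) :=
      (Nat.coprime_comm.mp ((hp.coprime_iff_not_dvd).mpr hndvd)).pow_right 2
    exact ZMod.mul_inv_of_unit _ ((ZMod.isUnit_iff_coprime k (p ^ 2)).mpr hcop)
  obtain ⟨m, rfl⟩ : ∃ m, n = m + 1 := ⟨n - 1, by omega⟩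
  set T := ∑ k ∈ Finset.Icc 1 (p - 1), ((k : ZMod (p ^ 2))⁻¹) ^ (m + 1) with hT
  set U := ∑ k ∈ Finset.Icc 1 (p - 1), ((k : ZMod (p ^ 2))⁻¹) ^ (m + 2) with hU
  -- p * U = 0
  have hPU : (p : ZMod (p ^ 2)) * U = 0 := by
    set f := ZMod.castHom (dvd_pow_self p (two_ne_zero)) (ZMod p) with hf
    have hfU : f U = 0 := by
      rw [hU, map_sum]
      have hterm : ∀ k ∈ Finset.Icc 1 (p - 1),
          f (((k : ZMod (p ^ 2))⁻¹) ^ (m + 2)) = ((k : ZMod p)⁻¹) ^ (m + 2) := by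
        intro k hk
        rw [Finset.mem_Icc] at hk
        rw [map_pow]
        congr 1
        have h1 : (k : ZMod p) * f ((k : ZMod (p ^ 2))⁻¹) = 1 := by
          have := hunit k hk.1 hk.2
          have h2 := congrArg f (this)
          rw [map_mul, map_one, map_natCast] at h2
          exact h2
        exact (ZMod.inv_eq_of_mul_eq_one p _ _ h1).symm
      rw [Finset.sum_congr rfl hterm]
      exact sum_inv_pow_zmod p hp (m + 2) (by omega) (by omega)
    -- kernel argument
    have hv : ((U.val : ℕ) : ZMod p) = 0 := by
      have : f U = ((U.val : ℕ) : ZMod p) := by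
        rw [hf, ZMod.castHom_apply, ← ZMod.natCast_val]
      rwa [this] at hfU
    obtain ⟨c, hc⟩ := (ZMod.natCast_eq_zero_iff _ p).mp hv
    have hUeq : U = ((p * c : ℕ) : ZMod (p ^ 2)) := by
      rw [← hc, ZMod.natCast_zmod_val]
    rw [hUeq]
    push_cast
    rw [← mul_assoc, hP, zero_mul]
  -- key identity and reindexing
  have hkey : ∀ k ∈ Finset.Icc 1 (p - 1),
      (((p - k : ℕ) : ZMod (p ^ 2))⁻¹) ^ (m + 1)
        = -(((k : ZMod (p ^ 2))⁻¹) ^ (m + 1))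
          - (((m + 1 : ℕ) : ZMod (p ^ 2)) * (p : ZMod (p ^ 2)))
              * ((k : ZMod (p ^ 2))⁻¹) ^ (m + 2) := by
    intro k hk
    rw [Finset.mem_Icc] at hk
    set a : ZMod (p ^ 2) := (k : ZMod (p ^ 2)) with ha
    set b : ZMod (p ^ 2) := (k : ZMod (p ^ 2))⁻¹ with hb
    set x : ZMod (p ^ 2) := ((p - k : ℕ) : ZMod (p ^ 2)) with hx
    set d : ZMod (p ^ 2) := ((p - k : ℕ) : ZMod (p ^ 2))⁻¹ with hd
    have hab : a * b = 1 := hunit k hk.1 hk.2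
    have hxd : x * d = 1 := hunit (p - k) (by omega) (by omega)
    have hxPa : x = (p : ZMod (p ^ 2)) - a := by
      rw [hx, Nat.cast_sub (by omega : k ≤ p), ha]
    have hxn : x ^ (m + 1)
        = -(a ^ (m + 1) - ((m + 1 : ℕ) : ZMod (p ^ 2)) * a ^ m * (p : ZMod (p ^ 2))) := by
      have hnegP : (-(p : ZMod (p ^ 2))) * (-(p : ZMod (p ^ 2))) = 0 := by
        rw [neg_mul_neg, hP]
      have hbin := sq_zero_add_pow a (-(p : ZMod (p ^ 2))) hnegP m
      have hx2 : x = -(a - (p : ZMod (p ^ 2))) := by rw [hxPa]; ring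
      rw [hx2, Odd.neg_pow hodd, sub_eq_add_neg, hbin]
      push_cast
      ring
    have h1 : a ^ (m + 1) * b ^ (m + 1) = 1 := by rw [← mul_pow, hab, one_pow]
    have h1' : a ^ m * b ^ m = 1 := by rw [← mul_pow, hab, one_pow]
    have h2 : a ^ (m + 1) * b ^ (m + 2) = b := by
      rw [pow_succ b (m + 1), ← mul_assoc, h1, one_mul]
    have h3 : a ^ m * b ^ (m + 1) = b := by
      rw [pow_succ b m, ← mul_assoc, h1', one_mul]
    have hdn : x ^ (m + 1) * d ^ (m + 1) = 1 := by rw [← mul_pow, hxd, one_pow]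
    have hc : x ^ (m + 1)
        * (-(b ^ (m + 1)) - (((m + 1 : ℕ) : ZMod (p ^ 2)) * (p : ZMod (p ^ 2))) * b ^ (m + 2))
          = 1 := by
      rw [hxn]
      push_cast
      linear_combination h1 + ((m : ZMod (p ^ 2)) + 1) * (p : ZMod (p ^ 2)) * h2
        - ((m : ZMod (p ^ 2)) + 1) * (p : ZMod (p ^ 2)) * h3
        - ((m : ZMod (p ^ 2)) + 1) * ((m : ZMod (p ^ 2)) + 1) * a ^ m * b ^ (m + 2) * hP
    linear_combination
      (-(b ^ (m + 1)) - (((m + 1 : ℕ) : ZMod (p ^ 2)) * (p : ZMod (p ^ 2))) * b ^ (m + 2)) * hdn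
        - d ^ (m + 1) * hc
  have hre : T = ∑ k ∈ Finset.Icc 1 (p - 1), (((p - k : ℕ) : ZMod (p ^ 2))⁻¹) ^ (m + 1) := by
    rw [hT]
    apply Finset.sum_nbij' (fun k => p - k) (fun k => p - k)
    · intro a ha; rw [Finset.mem_Icc] at *; omega
    · intro a ha; rw [Finset.mem_Icc] at *; omega
    · intro a ha; rw [Finset.mem_Icc] at ha; omega
    · intro a ha; rw [Finset.mem_Icc] at ha; omega
    · intro a ha
      rw [Finset.mem_Icc] at ha
      rw [show p - (p - a) = a by omega]
  have hTT : T + T = 0 := by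
    have hstep : T = -T - ((m + 1 : ℕ) : ZMod (p ^ 2)) * ((p : ZMod (p ^ 2)) * U) := by
      conv_lhs => rw [hre]
      rw [Finset.sum_congr rfl hkey, Finset.sum_sub_distrib, Finset.sum_neg_distrib,
        ← Finset.mul_sum, hT, hU]
      ring
    linear_combination hstep - ((m + 1 : ℕ) : ZMod (p ^ 2)) * hPU
  have h2u : IsUnit (2 : ZMod (p ^ 2)) := by
    have hcop : Nat.Coprime 2 (p ^ 2) :=
      (Nat.coprime_two_left.mpr (hp.odd_of_ne_two (by omega))).pow_right 2
    have h := (ZMod.isUnit_iff_coprime 2 (p ^ 2)).mpr hcop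
    exact_mod_cast h
  have h2T : (2 : ZMod (p ^ 2)) * T = 0 := by rw [two_mul]; exact hTT
  exact (h2u.mul_right_eq_zero).mp h2T

theorem stmt6 (p : ℕ) (hp : p.Prime) (h5 : 5 ≤ p) (n : ℕ) (hn : 1 ≤ n)
    (hnp : n ≤ p - 3) :
    (Odd n → PadicCong p 2 (∑ k ∈ Finset.Icc 1 (p - 1), (1 : ℚ) / (k : ℚ) ^ n) 0) ∧
    (Even n → PadicCong p 1 (∑ k ∈ Finset.Icc 1 (p - 1), (1 : ℚ) / (k : ℚ) ^ n) 0) := by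
  constructor
  · intro hodd
    unfold PadicCong
    rw [sub_zero]
    exact key_reduction p hp 2 n hn (sum_inv_pow_zmodsq p hp h5 n hn hodd hnp)
  · intro _
    unfold PadicCong
    rw [sub_zero]
    apply key_reduction p hp 1 n hn
    have h := sum_inv_pow_zmod p hp n hn (by omega)
    rw [show p ^ 1 = p from pow_one p]
    exact h
end

section
/- Let p be a Wolstenholme prime. Then C(2p-1, p-1) ≡ 1 + p·∑ 1/k - (p²/2)·∑ 1/k² + (p³/3)·∑ 1/k³ - (p⁴/4)·∑ 1/k⁴ + (p⁵/5)·∑ 1/k⁵ - (p⁶/6)·∑ 1/k⁶ (mod p⁸), where all sums run over k = 1, …, p-1. -/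
open Finset



section Newton
variable {α : Type*} [DecidableEq α] {R : Type*} [CommRing R]

lemma sum_pcs_insert {a : α} {s : Finset α} (h : a ∉ s) (n : ℕ) (g : Finset α → R) :
    ∑ A ∈ (insert a s).powersetCard (n+1), g A =
      ∑ A ∈ s.powersetCard (n+1), g A + ∑ A ∈ s.powersetCard n, g (insert a A) := by
  rw [Finset.powersetCard_succ_insert h, Finset.sum_union, Finset.sum_image]
  · intro A hA B hB hAB
    have hA' : a ∉ A := fun hx => h ((Finset.mem_powersetCard.1 hA).1 hx)
    have hB' : a ∉ B := fun hx => h ((Finset.mem_powersetCard.1 hB).1 hx)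
    rw [← Finset.erase_insert hA', ← Finset.erase_insert hB', hAB]
  · rw [Finset.disjoint_left]
    intro A hA hA'
    obtain ⟨B, hB, rfl⟩ := Finset.mem_image.1 hA'
    exact h ((Finset.mem_powersetCard.1 hA).1 (Finset.mem_insert_self a B))

lemma sum_pcs_one (s : Finset α) (f : α → R) :
    ∑ A ∈ s.powersetCard 1, ∏ i ∈ A, f i = ∑ i ∈ s, f i := by
  rw [Finset.powersetCard_one, Finset.sum_map]
  simp

lemma newton_two (s : Finset α) (f : α → R) :
    2 * ∑ A ∈ s.powersetCard 2, ∏ i ∈ A, f i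
      = (∑ i ∈ s, f i)^2 - ∑ i ∈ s, f i^2 := by
  induction s using Finset.induction with
  | empty =>
    rw [Finset.powersetCard_eq_empty.2 (by simp), Finset.sum_empty, mul_zero]; simp
  | @insert a s h ih =>
    rw [show (2:ℕ) = 1+1 from rfl, sum_pcs_insert h 1, Finset.sum_insert h, Finset.sum_insert h]
    have step : ∑ A ∈ s.powersetCard 1, ∏ i ∈ insert a A, f i
        = f a * ∑ i ∈ s, f i := by
      rw [← sum_pcs_one s f, Finset.mul_sum]
      refine Finset.sum_congr rfl fun A hA => ?_
      have : a ∉ A := fun hx => h ((Finset.mem_powersetCard.1 hA).1 hx)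
      rw [Finset.prod_insert this]
    rw [step]
    have h1 := sum_pcs_one s f
    linear_combination ih

lemma newton_three (s : Finset α) (f : α → R) :
    6 * ∑ A ∈ s.powersetCard 3, ∏ i ∈ A, f i
      = (∑ i ∈ s, f i)^3 - 3 * (∑ i ∈ s, f i) * (∑ i ∈ s, f i^2)
        + 2 * ∑ i ∈ s, f i^3 := by
  induction s using Finset.induction with
  | empty =>
    rw [Finset.powersetCard_eq_empty.2 (by simp), Finset.sum_empty, mul_zero]; simp
  | @insert a s h ih =>
    rw [show (3:ℕ) = 2+1 from rfl, sum_pcs_insert h 2, Finset.sum_insert h,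
      Finset.sum_insert h, Finset.sum_insert h]
    have step : ∑ A ∈ s.powersetCard 2, ∏ i ∈ insert a A, f i
        = f a * ∑ A ∈ s.powersetCard 2, ∏ i ∈ A, f i := by
      rw [Finset.mul_sum]
      refine Finset.sum_congr rfl fun A hA => ?_
      have : a ∉ A := fun hx => h ((Finset.mem_powersetCard.1 hA).1 hx)
      rw [Finset.prod_insert this]
    rw [step]
    linear_combination ih + 3 * f a * newton_two s f

end Newton


section Reflect
variable {M : Type*} [CommMonoid M]

@[to_additive]
lemma prod_reflect (m : ℕ) (f : ℕ → M) :
    ∏ k ∈ Finset.Ioc 0 (2*m), f k = ∏ k ∈ Finset.Ioc 0 m, (f k * f (2*m+1-k)) := by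
  rw [Finset.prod_mul_distrib, ← Finset.prod_Ioc_consecutive f (Nat.zero_le m) (by omega)]
  congr 1
  refine Finset.prod_nbij' (fun k => 2*m+1-k) (fun k => 2*m+1-k) ?_ ?_ ?_ ?_ ?_ <;>
      simp only [Finset.mem_Ioc] <;> intro a ha
  · omega
  · omega
  · omega
  · omega
  · congr 1; omega

end Reflect

lemma choose_prod_nat (p : ℕ) (hp : 1 ≤ p) :
    (2*p-1).choose (p-1) * (p-1).factorial = ∏ k ∈ Finset.Ioc 0 (p-1), (p + k) := by
  have h1 : (2*p-1).choose (p-1) * (p-1).factorial * p.factorial = (2*p-1).factorial := by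
    have := Nat.choose_mul_factorial_mul_factorial (n := 2*p-1) (k := p-1) (by omega)
    rwa [show 2*p-1-(p-1) = p by omega] at this
  have h2 : (∏ k ∈ Finset.Ioc 0 (p-1), (p + k)) * p.factorial = (2*p-1).factorial := by
    have e1 : ∏ k ∈ Finset.Ioc 0 (p-1), (p + k) = ∏ k ∈ Finset.Ioc p (2*p-1), k := by
      refine Finset.prod_nbij' (fun k => p + k) (fun k => k - p) ?_ ?_ ?_ ?_ ?_ <;>
          simp only [Finset.mem_Ioc] <;> intro a ha
      all_goals (intros; first | omega | trivial | (congr 1; omega))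
    have e2 : ∀ n : ℕ, ∏ k ∈ Finset.Ioc 0 n, k = n.factorial := by
      intro n
      rw [← Finset.Icc_add_one_left_eq_Ioc, ← Finset.Ico_add_one_right_eq_Icc, zero_add, Finset.prod_Ico_id_eq_factorial]
    rw [e1, mul_comm, ← e2 p, Finset.prod_Ioc_consecutive _ (Nat.zero_le p) (by omega), e2]
  exact Nat.eq_of_mul_eq_mul_right p.factorial_pos (h1.trans h2.symm)

lemma choose_prod_rat (p : ℕ) (hp : 1 ≤ p) :
    (((2*p-1).choose (p-1) : ℕ) : ℚ) = ∏ k ∈ Finset.Ioc 0 (p-1), (1 + (p:ℚ) * (k:ℚ)⁻¹) := by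
  have hfe : ((p-1).factorial : ℚ) = ∏ k ∈ Finset.Ioc 0 (p-1), (k:ℚ) := by
    rw [← Nat.cast_prod]
    congr 1
    rw [← Finset.Icc_add_one_left_eq_Ioc, ← Finset.Ico_add_one_right_eq_Icc, zero_add, Finset.prod_Ico_id_eq_factorial]
  have hf : (∏ k ∈ Finset.Ioc 0 (p-1), (k:ℚ)) ≠ 0 := by
    rw [← hfe]; exact_mod_cast (p-1).factorial_pos.ne'
  have key := congrArg (Nat.cast : ℕ → ℚ) (choose_prod_nat p hp)
  push_cast at key
  rw [hfe] at key
  have h3 : (∏ k ∈ Finset.Ioc 0 (p-1), (1 + (p:ℚ) * (k:ℚ)⁻¹)) * ∏ k ∈ Finset.Ioc 0 (p-1), (k:ℚ)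
      = ∏ k ∈ Finset.Ioc 0 (p-1), ((p:ℚ) + (k:ℚ)) := by
    rw [← Finset.prod_mul_distrib]
    refine Finset.prod_congr rfl fun k hk => ?_
    have hk0 : (k:ℚ) ≠ 0 := by
      simp only [Finset.mem_Ioc] at hk
      exact_mod_cast (by omega : k ≠ 0)
    field_simp
    ring
  exact mul_right_cancel₀ hf (key.trans h3.symm)


section PadicHelpers2
variable {p : ℕ} [hfp : Fact p.Prime]

lemma ultra_add {x y : ℚ_[p]} {C : ℝ} (hx : ‖x‖ ≤ C) (hy : ‖y‖ ≤ C) : ‖x + y‖ ≤ C :=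
  (IsUltrametricDist.norm_add_le_max x y).trans (max_le hx hy)

lemma ultra_sub {x y : ℚ_[p]} {C : ℝ} (hx : ‖x‖ ≤ C) (hy : ‖y‖ ≤ C) : ‖x - y‖ ≤ C := by
  rw [sub_eq_add_neg]
  exact ultra_add hx (by rwa [norm_neg])

lemma norm_natCast_one {k : ℕ} (h0 : 0 < k) (h1 : k < p) : ‖(k : ℚ_[p])‖ = 1 := by
  have hcast : ((k:ℤ) : ℚ_[p]) = (k : ℚ_[p]) := by push_cast; ring
  refine le_antisymm (hcast ▸ Padic.norm_int_le_one _) ?_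
  by_contra hlt
  push_neg at hlt
  have hdvd : (p:ℤ) ∣ (k:ℤ) := Padic.norm_intCast_lt_one_iff.1 (by rwa [hcast])
  rw [Int.natCast_dvd_natCast] at hdvd
  exact absurd (Nat.le_of_dvd h0 hdvd) (by omega)

lemma natCast_ne_zero_K {k : ℕ} (h0 : 0 < k) (h1 : k < p) : (k : ℚ_[p]) ≠ 0 := by
  intro h
  have h2 := norm_natCast_one (p := p) h0 h1
  rw [h, norm_zero] at h2
  norm_num at h2

end PadicHelpers2

section PadicHelpers2
variable {p : ℕ} [hfp : Fact p.Prime]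

lemma padicCong_iff_norm (n : ℕ) (a b : ℚ) :
    PadicCong p n a b ↔ ‖((a:ℚ_[p]) - (b:ℚ_[p]))‖ ≤ (p:ℝ)^(-(n:ℤ)) := by
  rw [show ((a:ℚ_[p]) - (b:ℚ_[p])) = ((a - b : ℚ) : ℚ_[p]) by push_cast; ring,
    Padic.eq_padicNorm]
  have h1 : ((p:ℝ)^(-(n:ℤ))) = (((p:ℚ)^(-(n:ℤ)) : ℚ) : ℝ) := by push_cast; ring
  rw [h1]
  unfold PadicCong
  exact Rat.cast_le.symm

end PadicHelpers2

section FieldIds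
variable {F : Type*} [Field F] {x y : F}

lemma pid0 (hx : x ≠ 0) (hy : y ≠ 0) :
    (1 + (x+y) * x⁻¹) * (1 + (x+y) * y⁻¹) = 1 + 2*(x+y)^2 * (x⁻¹*y⁻¹) := by
  field_simp; ring

lemma pid1 (hx : x ≠ 0) (hy : y ≠ 0) :
    x⁻¹ + y⁻¹ = (x+y) * (x⁻¹*y⁻¹) := by
  field_simp; ring

lemma pid2 (hx : x ≠ 0) (hy : y ≠ 0) :
    x⁻¹^2 + y⁻¹^2 = (x+y)^2 * (x⁻¹*y⁻¹)^2 - 2*(x⁻¹*y⁻¹) := by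
  field_simp; ring

lemma pid3 (hx : x ≠ 0) (hy : y ≠ 0) :
    x⁻¹^3 + y⁻¹^3 = (x+y)^3 * (x⁻¹*y⁻¹)^3 - 3*(x+y)*(x⁻¹*y⁻¹)^2 := by
  field_simp; ring

lemma pid4 (hx : x ≠ 0) (hy : y ≠ 0) :
    x⁻¹^4 + y⁻¹^4 = (x+y)^4 * (x⁻¹*y⁻¹)^4 - 4*(x+y)^2*(x⁻¹*y⁻¹)^3 + 2*(x⁻¹*y⁻¹)^2 := by
  field_simp; ring

lemma pid5 (hx : x ≠ 0) (hy : y ≠ 0) :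
    x⁻¹^5 + y⁻¹^5 = (x+y)^5 * (x⁻¹*y⁻¹)^5 - 5*(x+y)^3*(x⁻¹*y⁻¹)^4 + 5*(x+y)*(x⁻¹*y⁻¹)^3 := by
  field_simp; ring

lemma pid6 (hx : x ≠ 0) (hy : y ≠ 0) :
    x⁻¹^6 + y⁻¹^6 = (x+y)^6 * (x⁻¹*y⁻¹)^6 - 6*(x+y)^4*(x⁻¹*y⁻¹)^5 + 9*(x+y)^2*(x⁻¹*y⁻¹)^4
      - 2*(x⁻¹*y⁻¹)^3 := by
  linear_combination (x⁻¹^3 + y⁻¹^3 + ((x+y)^3*(x⁻¹*y⁻¹)^3 - 3*(x+y)*(x⁻¹*y⁻¹)^2)) * pid3 hx hy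

end FieldIds

noncomputable def tK (p : ℕ) [Fact p.Prime] (k : ℕ) : ℚ_[p] := (k : ℚ_[p])⁻¹ * ((p - k : ℕ) : ℚ_[p])⁻¹

theorem stmt9 (p : ℕ) (hp : p.Prime)
    (hw : PadicCong p 4 ((Nat.choose (2 * p - 1) (p - 1)) : ℚ) 1) :
    PadicCong p 8 ((Nat.choose (2 * p - 1) (p - 1)) : ℚ)
      (1 + (p : ℚ) * (∑ k ∈ Finset.Icc 1 (p - 1), (1 : ℚ) / (k : ℚ)) - (p : ℚ) ^ 2 / 2 * (∑ k ∈ Finset.Icc 1 (p - 1), (1 : ℚ) / (k : ℚ) ^ 2)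
        + (p : ℚ) ^ 3 / 3 * (∑ k ∈ Finset.Icc 1 (p - 1), (1 : ℚ) / (k : ℚ) ^ 3) - (p : ℚ) ^ 4 / 4 * (∑ k ∈ Finset.Icc 1 (p - 1), (1 : ℚ) / (k : ℚ) ^ 4)
        + (p : ℚ) ^ 5 / 5 * (∑ k ∈ Finset.Icc 1 (p - 1), (1 : ℚ) / (k : ℚ) ^ 5) - (p : ℚ) ^ 6 / 6 * (∑ k ∈ Finset.Icc 1 (p - 1), (1 : ℚ) / (k : ℚ) ^ 6)) := by
  have hfact : Fact p.Prime := ⟨hp⟩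
  -- exclude p = 2, 3, 5
  have hne : p ≠ 2 ∧ p ≠ 3 ∧ p ≠ 5 := by
    refine ⟨?_, ?_, ?_⟩ <;> rintro rfl
    · rw [padicCong_iff_norm] at hw
      rw [show Nat.choose (2*2-1) (2-1) = 3 from by decide] at hw
      rw [show (((3:ℕ) : ℚ) : ℚ_[2]) - ((1:ℚ) : ℚ_[2]) = ((2:ℤ) : ℚ_[2]) by push_cast; ring,
        Padic.norm_int_le_pow_iff_dvd] at hw
      norm_num at hw
    · rw [padicCong_iff_norm] at hw
      rw [show Nat.choose (2*3-1) (3-1) = 10 from by decide] at hw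
      rw [show (((10:ℕ) : ℚ) : ℚ_[3]) - ((1:ℚ) : ℚ_[3]) = ((9:ℤ) : ℚ_[3]) by push_cast; ring,
        Padic.norm_int_le_pow_iff_dvd] at hw
      norm_num at hw
    · rw [padicCong_iff_norm] at hw
      rw [show Nat.choose (2*5-1) (5-1) = 126 from by decide] at hw
      rw [show (((126:ℕ) : ℚ) : ℚ_[5]) - ((1:ℚ) : ℚ_[5]) = ((125:ℤ) : ℚ_[5]) by push_cast; ring,
        Padic.norm_int_le_pow_iff_dvd] at hw
      norm_num at hw
  have hp7 : 7 ≤ p := by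
    by_contra hlt
    push_neg at hlt
    have h2le := hp.two_le
    interval_cases p
    · exact hne.1 rfl
    · exact hne.2.1 rfl
    · norm_num at hp
    · exact hne.2.2 rfl
    · norm_num at hp
  obtain ⟨m, hm⟩ : ∃ m, p = 2*m + 1 := by
    have hodd : p % 2 = 1 := Nat.odd_iff.mp (hp.odd_of_ne_two hne.1)
    exact ⟨p/2, by omega⟩
  have hm3 : 3 ≤ m := by omega
  -- basic norm facts
  have hp1R : (1:ℝ) ≤ (p:ℝ) := by exact_mod_cast hp.one_lt.le
  have hB0 : (0:ℝ) ≤ ((p:ℝ))⁻¹ := by positivity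
  have hBpos : (0:ℝ) < ((p:ℝ))⁻¹ := by
    have : (0:ℝ) < (p:ℝ) := by positivity
    positivity
  have hB1 : ((p:ℝ))⁻¹ ≤ 1 := inv_le_one_of_one_le₀ hp1R
  have hBpow : ∀ n : ℕ, (p:ℝ)^(-(n:ℤ)) = ((p:ℝ))⁻¹^n := by
    intro n
    rw [zpow_neg, zpow_natCast, inv_pow]
  have hnormp : ‖(p:ℚ_[p])‖ = ((p:ℝ))⁻¹ := Padic.norm_p
  have hnorm2 : ‖(2:ℚ_[p])‖ = 1 := by
    rw [show (2:ℚ_[p]) = ((2:ℕ):ℚ_[p]) by norm_cast]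
    exact norm_natCast_one (by norm_num) (by omega)
  have hnorm3 : ‖(3:ℚ_[p])‖ = 1 := by
    rw [show (3:ℚ_[p]) = ((3:ℕ):ℚ_[p]) by norm_cast]
    exact norm_natCast_one (by norm_num) (by omega)
  have hnorm4 : ‖(4:ℚ_[p])‖ = 1 := by
    rw [show (4:ℚ_[p]) = ((4:ℕ):ℚ_[p]) by norm_cast]
    exact norm_natCast_one (by norm_num) (by omega)
  have hnorm5 : ‖(5:ℚ_[p])‖ = 1 := by
    rw [show (5:ℚ_[p]) = ((5:ℕ):ℚ_[p]) by norm_cast]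
    exact norm_natCast_one (by norm_num) (by omega)
  have hnorm6 : ‖(6:ℚ_[p])‖ = 1 := by
    rw [show (6:ℚ_[p]) = ((6:ℕ):ℚ_[p]) by norm_cast]
    exact norm_natCast_one (by norm_num) (by omega)
  have hnorm11 : ‖(11:ℚ_[p])‖ ≤ 1 := by
    rw [show (11:ℚ_[p]) = ((11:ℤ):ℚ_[p]) by norm_cast]
    exact Padic.norm_int_le_one _
  have hnormc : ‖(2*(p:ℚ_[p])^2)‖ = ((p:ℝ))⁻¹^2 := by
    rw [norm_mul, hnorm2, norm_pow, hnormp, one_mul]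
  have htle : ∀ k ∈ Finset.Ioc 0 m, ‖tK p k‖ ≤ 1 := by
    intro k hk
    simp only [Finset.mem_Ioc] at hk
    rw [tK, norm_mul, norm_inv, norm_inv, norm_natCast_one hk.1 (by omega),
      norm_natCast_one (k := p - k) (by omega) (by omega)]
    norm_num
  have hqle : ∀ j : ℕ, ‖∑ k ∈ Finset.Ioc 0 m, tK p k ^ j‖ ≤ 1 := by
    intro j
    apply IsUltrametricDist.norm_sum_le_of_forall_le_of_nonneg zero_le_one
    intro k hk
    rw [norm_pow]
    exact pow_le_one₀ (norm_nonneg _) (htle k hk)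
  have hq1le : ‖(∑ k ∈ Finset.Ioc 0 m, tK p k)‖ ≤ 1 := by
    have := hqle 1
    simpa using this
  have hFle : ∀ j : ℕ, ‖∑ A ∈ Finset.powersetCard j (Finset.Ioc 0 m), ∏ k ∈ A, tK p k‖ ≤ 1 := by
    intro j
    apply IsUltrametricDist.norm_sum_le_of_forall_le_of_nonneg zero_le_one
    intro A hA
    rw [norm_prod]
    refine Finset.prod_le_one (fun k _ => norm_nonneg _) fun k hk => ?_
    exact htle k ((Finset.mem_powersetCard.1 hA).1 hk)
  -- the product expansion
  have h1 : (((2 * p - 1).choose (p - 1) : ℚ) : ℚ_[p]) = ∏ k ∈ Finset.Ioc 0 (p-1), (1 + (p:ℚ_[p]) * (k:ℚ_[p])⁻¹) := by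
    rw [choose_prod_rat p (by omega)]
    push_cast
    rfl
  have h2 : (((2 * p - 1).choose (p - 1) : ℚ) : ℚ_[p]) = ∏ k ∈ Finset.Ioc 0 m, (1 + 2*(p:ℚ_[p])^2 * tK p k) := by
    rw [h1, show p - 1 = 2*m by omega, prod_reflect]
    refine Finset.prod_congr rfl fun k hk => ?_
    simp only [Finset.mem_Ioc] at hk
    have hx0 : (k:ℚ_[p]) ≠ 0 := natCast_ne_zero_K hk.1 (by omega)
    have hy0 : (((p - k : ℕ)):ℚ_[p]) ≠ 0 := natCast_ne_zero_K (by omega) (by omega)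
    have hxy : (k:ℚ_[p]) + ((p - k : ℕ):ℚ_[p]) = (p:ℚ_[p]) := by
      rw [Nat.cast_sub (by omega : k ≤ p)]; ring
    rw [show 2*m+1-k = p-k by omega]
    simp only [tK]
    rw [← hxy]
    exact pid0 hx0 hy0
  have h3 : (((2 * p - 1).choose (p - 1) : ℚ) : ℚ_[p])
      = 1 + 2*(p:ℚ_[p])^2 * (∑ k ∈ Finset.Ioc 0 m, tK p k)
        + (2*(p:ℚ_[p])^2)^2 * (∑ A ∈ Finset.powersetCard 2 (Finset.Ioc 0 m), ∏ k ∈ A, tK p k)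
        + (2*(p:ℚ_[p])^2)^3 * (∑ A ∈ Finset.powersetCard 3 (Finset.Ioc 0 m), ∏ k ∈ A, tK p k)
        + (∑ j ∈ Finset.Ico 4 (m+1), (2*(p:ℚ_[p])^2)^j * ∑ A ∈ Finset.powersetCard j (Finset.Ioc 0 m), ∏ k ∈ A, tK p k) := by
    rw [h2]
    rw [show (∏ k ∈ Finset.Ioc 0 m, (1 + 2*(p:ℚ_[p])^2 * tK p k))
        = ∏ k ∈ Finset.Ioc 0 m, (2*(p:ℚ_[p])^2 * tK p k + 1) from
      Finset.prod_congr rfl fun k _ => add_comm _ _]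
    rw [Finset.prod_add]
    simp only [Finset.prod_const_one, mul_one]
    rw [Finset.sum_powerset]
    have hcard : (Finset.Ioc 0 m).card = m := by simp
    rw [hcard]
    have e3 : ∀ j ∈ Finset.range (m+1),
        (∑ A ∈ Finset.powersetCard j (Finset.Ioc 0 m), ∏ k ∈ A, (2*(p:ℚ_[p])^2 * tK p k))
        = (2*(p:ℚ_[p])^2)^j * ∑ A ∈ Finset.powersetCard j (Finset.Ioc 0 m), ∏ k ∈ A, tK p k := by
      intro j _
      rw [Finset.mul_sum]
      refine Finset.sum_congr rfl fun A hA => ?_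
      rw [Finset.prod_mul_distrib, Finset.prod_const, (Finset.mem_powersetCard.1 hA).2]
    rw [Finset.sum_congr rfl e3]
    rw [Finset.range_eq_Ico, ← Finset.sum_Ico_consecutive _ (Nat.zero_le 4) (by omega : 4 ≤ m+1),
      ← Finset.range_eq_Ico]
    rw [Finset.sum_range_succ, Finset.sum_range_succ, Finset.sum_range_succ, Finset.sum_range_one]
    rw [Finset.powersetCard_zero, Finset.sum_singleton, Finset.prod_empty, sum_pcs_one]
    ring
  -- tail bound
  have htail : ‖(∑ j ∈ Finset.Ico 4 (m+1), (2*(p:ℚ_[p])^2)^j * ∑ A ∈ Finset.powersetCard j (Finset.Ioc 0 m), ∏ k ∈ A, tK p k)‖ ≤ ((p:ℝ))⁻¹^8 := by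
    apply IsUltrametricDist.norm_sum_le_of_forall_le_of_nonneg (by positivity)
    intro j hj
    rw [Finset.mem_Ico] at hj
    rw [norm_mul, norm_pow, hnormc, ← pow_mul]
    refine le_trans (mul_le_of_le_one_right (by positivity) (hFle j)) ?_
    exact pow_le_pow_of_le_one hB0 hB1 (by omega)
  -- bounds from the Wolstenholme hypothesis
  rw [padicCong_iff_norm] at hw ⊢
  rw [hBpow 4, Rat.cast_one] at hw
  rw [hBpow 8]
  have hq1 : ‖(∑ k ∈ Finset.Ioc 0 m, tK p k)‖ ≤ ((p:ℝ))⁻¹^2 := by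
    have hrw : 2*(p:ℚ_[p])^2 * (∑ k ∈ Finset.Ioc 0 m, tK p k)
        = ((((2 * p - 1).choose (p - 1) : ℚ) : ℚ_[p]) - 1)
          - (2*(p:ℚ_[p])^2)^2 * (∑ A ∈ Finset.powersetCard 2 (Finset.Ioc 0 m), ∏ k ∈ A, tK p k)
          - (2*(p:ℚ_[p])^2)^3 * (∑ A ∈ Finset.powersetCard 3 (Finset.Ioc 0 m), ∏ k ∈ A, tK p k)
          - (∑ j ∈ Finset.Ico 4 (m+1), (2*(p:ℚ_[p])^2)^j * ∑ A ∈ Finset.powersetCard j (Finset.Ioc 0 m), ∏ k ∈ A, tK p k) := by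
      rw [h3]; ring
    have hb : ‖2*(p:ℚ_[p])^2 * (∑ k ∈ Finset.Ioc 0 m, tK p k)‖ ≤ ((p:ℝ))⁻¹^4 := by
      rw [hrw]
      refine ultra_sub (ultra_sub (ultra_sub hw ?_) ?_) ?_
      · rw [norm_mul, norm_pow, hnormc, ← pow_mul]
        exact le_trans (mul_le_of_le_one_right (by positivity) (hFle 2)) (by norm_num)
      · rw [norm_mul, norm_pow, hnormc, ← pow_mul]
        refine le_trans (mul_le_of_le_one_right (by positivity) (hFle 3)) ?_
        exact pow_le_pow_of_le_one hB0 hB1 (by omega)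
      · exact htail.trans (pow_le_pow_of_le_one hB0 hB1 (by omega))
    rw [norm_mul, hnormc] at hb
    have hBB : ((p:ℝ))⁻¹^4 = ((p:ℝ))⁻¹^2 * ((p:ℝ))⁻¹^2 := by ring
    rw [hBB] at hb
    exact le_of_mul_le_mul_left hb (by positivity)
  -- power sum reflection identities

  have hs1 : (∑ k ∈ Finset.Ioc 0 (p-1), (k:ℚ_[p])⁻¹) = (p:ℚ_[p]) * (∑ k ∈ Finset.Ioc 0 m, tK p k) := by
    rw [show p - 1 = 2*m by omega, sum_reflect]
    have hpt : ∀ k ∈ Finset.Ioc 0 m, ((k:ℚ_[p])⁻¹ + (((2*m+1-k : ℕ)):ℚ_[p])⁻¹) = ((p:ℚ_[p]) * tK p k) := by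
      intro k hk
      simp only [Finset.mem_Ioc] at hk
      have hx0 : (k:ℚ_[p]) ≠ 0 := natCast_ne_zero_K hk.1 (by omega)
      have hy0 : (((p - k : ℕ)):ℚ_[p]) ≠ 0 := natCast_ne_zero_K (by omega) (by omega)
      have hxy : (k:ℚ_[p]) + ((p - k : ℕ):ℚ_[p]) = (p:ℚ_[p]) := by
        rw [Nat.cast_sub (by omega : k ≤ p)]; ring
      rw [show 2*m+1-k = p-k by omega]
      simp only [tK]
      rw [← hxy]
      exact pid1 hx0 hy0
    rw [Finset.sum_congr rfl hpt]
    simp only [Finset.sum_add_distrib, Finset.sum_sub_distrib, ← Finset.mul_sum]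
    try ring

  have hs2 : (∑ k ∈ Finset.Ioc 0 (p-1), (k:ℚ_[p])⁻¹ ^ 2) = (p:ℚ_[p])^2 * (∑ k ∈ Finset.Ioc 0 m, tK p k ^ 2) - 2 * (∑ k ∈ Finset.Ioc 0 m, tK p k) := by
    rw [show p - 1 = 2*m by omega, sum_reflect]
    have hpt : ∀ k ∈ Finset.Ioc 0 m, ((k:ℚ_[p])⁻¹ ^ 2 + (((2*m+1-k : ℕ)):ℚ_[p])⁻¹ ^ 2) = ((p:ℚ_[p])^2 * tK p k^2 - 2 * tK p k) := by
      intro k hk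
      simp only [Finset.mem_Ioc] at hk
      have hx0 : (k:ℚ_[p]) ≠ 0 := natCast_ne_zero_K hk.1 (by omega)
      have hy0 : (((p - k : ℕ)):ℚ_[p]) ≠ 0 := natCast_ne_zero_K (by omega) (by omega)
      have hxy : (k:ℚ_[p]) + ((p - k : ℕ):ℚ_[p]) = (p:ℚ_[p]) := by
        rw [Nat.cast_sub (by omega : k ≤ p)]; ring
      rw [show 2*m+1-k = p-k by omega]
      simp only [tK]
      rw [← hxy]
      exact pid2 hx0 hy0
    rw [Finset.sum_congr rfl hpt]
    simp only [Finset.sum_add_distrib, Finset.sum_sub_distrib, ← Finset.mul_sum]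
    try ring

  have hs3 : (∑ k ∈ Finset.Ioc 0 (p-1), (k:ℚ_[p])⁻¹ ^ 3) = (p:ℚ_[p])^3 * (∑ k ∈ Finset.Ioc 0 m, tK p k ^ 3) - 3*(p:ℚ_[p]) * (∑ k ∈ Finset.Ioc 0 m, tK p k ^ 2) := by
    rw [show p - 1 = 2*m by omega, sum_reflect]
    have hpt : ∀ k ∈ Finset.Ioc 0 m, ((k:ℚ_[p])⁻¹ ^ 3 + (((2*m+1-k : ℕ)):ℚ_[p])⁻¹ ^ 3) = ((p:ℚ_[p])^3 * tK p k^3 - 3*(p:ℚ_[p]) * tK p k^2) := by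
      intro k hk
      simp only [Finset.mem_Ioc] at hk
      have hx0 : (k:ℚ_[p]) ≠ 0 := natCast_ne_zero_K hk.1 (by omega)
      have hy0 : (((p - k : ℕ)):ℚ_[p]) ≠ 0 := natCast_ne_zero_K (by omega) (by omega)
      have hxy : (k:ℚ_[p]) + ((p - k : ℕ):ℚ_[p]) = (p:ℚ_[p]) := by
        rw [Nat.cast_sub (by omega : k ≤ p)]; ring
      rw [show 2*m+1-k = p-k by omega]
      simp only [tK]
      rw [← hxy]
      exact pid3 hx0 hy0
    rw [Finset.sum_congr rfl hpt]
    simp only [Finset.sum_add_distrib, Finset.sum_sub_distrib, ← Finset.mul_sum]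
    try ring

  have hs4 : (∑ k ∈ Finset.Ioc 0 (p-1), (k:ℚ_[p])⁻¹ ^ 4) = (p:ℚ_[p])^4 * (∑ k ∈ Finset.Ioc 0 m, tK p k ^ 4) - 4*(p:ℚ_[p])^2 * (∑ k ∈ Finset.Ioc 0 m, tK p k ^ 3) + 2 * (∑ k ∈ Finset.Ioc 0 m, tK p k ^ 2) := by
    rw [show p - 1 = 2*m by omega, sum_reflect]
    have hpt : ∀ k ∈ Finset.Ioc 0 m, ((k:ℚ_[p])⁻¹ ^ 4 + (((2*m+1-k : ℕ)):ℚ_[p])⁻¹ ^ 4) = ((p:ℚ_[p])^4 * tK p k^4 - 4*(p:ℚ_[p])^2 * tK p k^3 + 2 * tK p k^2) := by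
      intro k hk
      simp only [Finset.mem_Ioc] at hk
      have hx0 : (k:ℚ_[p]) ≠ 0 := natCast_ne_zero_K hk.1 (by omega)
      have hy0 : (((p - k : ℕ)):ℚ_[p]) ≠ 0 := natCast_ne_zero_K (by omega) (by omega)
      have hxy : (k:ℚ_[p]) + ((p - k : ℕ):ℚ_[p]) = (p:ℚ_[p]) := by
        rw [Nat.cast_sub (by omega : k ≤ p)]; ring
      rw [show 2*m+1-k = p-k by omega]
      simp only [tK]
      rw [← hxy]
      exact pid4 hx0 hy0
    rw [Finset.sum_congr rfl hpt]
    simp only [Finset.sum_add_distrib, Finset.sum_sub_distrib, ← Finset.mul_sum]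
    try ring

  have hs5 : (∑ k ∈ Finset.Ioc 0 (p-1), (k:ℚ_[p])⁻¹ ^ 5) = (p:ℚ_[p])^5 * (∑ k ∈ Finset.Ioc 0 m, tK p k ^ 5) - 5*(p:ℚ_[p])^3 * (∑ k ∈ Finset.Ioc 0 m, tK p k ^ 4) + 5*(p:ℚ_[p]) * (∑ k ∈ Finset.Ioc 0 m, tK p k ^ 3) := by
    rw [show p - 1 = 2*m by omega, sum_reflect]
    have hpt : ∀ k ∈ Finset.Ioc 0 m, ((k:ℚ_[p])⁻¹ ^ 5 + (((2*m+1-k : ℕ)):ℚ_[p])⁻¹ ^ 5) = ((p:ℚ_[p])^5 * tK p k^5 - 5*(p:ℚ_[p])^3 * tK p k^4 + 5*(p:ℚ_[p]) * tK p k^3) := by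
      intro k hk
      simp only [Finset.mem_Ioc] at hk
      have hx0 : (k:ℚ_[p]) ≠ 0 := natCast_ne_zero_K hk.1 (by omega)
      have hy0 : (((p - k : ℕ)):ℚ_[p]) ≠ 0 := natCast_ne_zero_K (by omega) (by omega)
      have hxy : (k:ℚ_[p]) + ((p - k : ℕ):ℚ_[p]) = (p:ℚ_[p]) := by
        rw [Nat.cast_sub (by omega : k ≤ p)]; ring
      rw [show 2*m+1-k = p-k by omega]
      simp only [tK]
      rw [← hxy]
      exact pid5 hx0 hy0
    rw [Finset.sum_congr rfl hpt]
    simp only [Finset.sum_add_distrib, Finset.sum_sub_distrib, ← Finset.mul_sum]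
    try ring

  have hs6 : (∑ k ∈ Finset.Ioc 0 (p-1), (k:ℚ_[p])⁻¹ ^ 6) = (p:ℚ_[p])^6 * (∑ k ∈ Finset.Ioc 0 m, tK p k ^ 6) - 6*(p:ℚ_[p])^4 * (∑ k ∈ Finset.Ioc 0 m, tK p k ^ 5) + 9*(p:ℚ_[p])^2 * (∑ k ∈ Finset.Ioc 0 m, tK p k ^ 4) - 2 * (∑ k ∈ Finset.Ioc 0 m, tK p k ^ 3) := by
    rw [show p - 1 = 2*m by omega, sum_reflect]
    have hpt : ∀ k ∈ Finset.Ioc 0 m, ((k:ℚ_[p])⁻¹ ^ 6 + (((2*m+1-k : ℕ)):ℚ_[p])⁻¹ ^ 6) = ((p:ℚ_[p])^6 * tK p k^6 - 6*(p:ℚ_[p])^4 * tK p k^5 + 9*(p:ℚ_[p])^2 * tK p k^4 - 2 * tK p k^3) := by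
      intro k hk
      simp only [Finset.mem_Ioc] at hk
      have hx0 : (k:ℚ_[p]) ≠ 0 := natCast_ne_zero_K hk.1 (by omega)
      have hy0 : (((p - k : ℕ)):ℚ_[p]) ≠ 0 := natCast_ne_zero_K (by omega) (by omega)
      have hxy : (k:ℚ_[p]) + ((p - k : ℕ):ℚ_[p]) = (p:ℚ_[p]) := by
        rw [Nat.cast_sub (by omega : k ≤ p)]; ring
      rw [show 2*m+1-k = p-k by omega]
      simp only [tK]
      rw [← hxy]
      exact pid6 hx0 hy0
    rw [Finset.sum_congr rfl hpt]
    simp only [Finset.sum_add_distrib, Finset.sum_sub_distrib, ← Finset.mul_sum]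
    try ring

  -- rewrite the RHS of the congruence
  have hIcc : Finset.Icc 1 (p-1) = Finset.Ioc 0 (p-1) := by
    ext x
    simp only [Finset.mem_Icc, Finset.mem_Ioc]
    omega
  have hRHSfull : (((1 + (p : ℚ) * (∑ k ∈ Finset.Icc 1 (p - 1), (1 : ℚ) / (k : ℚ)) - (p : ℚ) ^ 2 / 2 * (∑ k ∈ Finset.Icc 1 (p - 1), (1 : ℚ) / (k : ℚ) ^ 2)
        + (p : ℚ) ^ 3 / 3 * (∑ k ∈ Finset.Icc 1 (p - 1), (1 : ℚ) / (k : ℚ) ^ 3) - (p : ℚ) ^ 4 / 4 * (∑ k ∈ Finset.Icc 1 (p - 1), (1 : ℚ) / (k : ℚ) ^ 4)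
        + (p : ℚ) ^ 5 / 5 * (∑ k ∈ Finset.Icc 1 (p - 1), (1 : ℚ) / (k : ℚ) ^ 5) - (p : ℚ) ^ 6 / 6 * (∑ k ∈ Finset.Icc 1 (p - 1), (1 : ℚ) / (k : ℚ) ^ 6)) : ℚ) : ℚ_[p])
      = 1 + (p:ℚ_[p]) * ((p:ℚ_[p]) * (∑ k ∈ Finset.Ioc 0 m, tK p k))
        - (p:ℚ_[p])^2/2 * ((p:ℚ_[p])^2 * (∑ k ∈ Finset.Ioc 0 m, tK p k ^ 2) - 2 * (∑ k ∈ Finset.Ioc 0 m, tK p k))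
        + (p:ℚ_[p])^3/3 * ((p:ℚ_[p])^3 * (∑ k ∈ Finset.Ioc 0 m, tK p k ^ 3) - 3*(p:ℚ_[p]) * (∑ k ∈ Finset.Ioc 0 m, tK p k ^ 2))
        - (p:ℚ_[p])^4/4 * ((p:ℚ_[p])^4 * (∑ k ∈ Finset.Ioc 0 m, tK p k ^ 4) - 4*(p:ℚ_[p])^2 * (∑ k ∈ Finset.Ioc 0 m, tK p k ^ 3) + 2 * (∑ k ∈ Finset.Ioc 0 m, tK p k ^ 2))
        + (p:ℚ_[p])^5/5 * ((p:ℚ_[p])^5 * (∑ k ∈ Finset.Ioc 0 m, tK p k ^ 5) - 5*(p:ℚ_[p])^3 * (∑ k ∈ Finset.Ioc 0 m, tK p k ^ 4) + 5*(p:ℚ_[p]) * (∑ k ∈ Finset.Ioc 0 m, tK p k ^ 3))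
        - (p:ℚ_[p])^6/6 * ((p:ℚ_[p])^6 * (∑ k ∈ Finset.Ioc 0 m, tK p k ^ 6) - 6*(p:ℚ_[p])^4 * (∑ k ∈ Finset.Ioc 0 m, tK p k ^ 5) + 9*(p:ℚ_[p])^2 * (∑ k ∈ Finset.Ioc 0 m, tK p k ^ 4) - 2 * (∑ k ∈ Finset.Ioc 0 m, tK p k ^ 3)) := by
    rw [hIcc]
    push_cast
    simp only [one_div, ← inv_pow]
    rw [hs1, hs2, hs3, hs4, hs5, hs6]
  have hn2 := newton_two (Finset.Ioc 0 m) (tK p)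
  have hn3 := newton_three (Finset.Ioc 0 m) (tK p)
  have hdiff : (((2 * p - 1).choose (p - 1) : ℚ) : ℚ_[p]) - (((1 + (p : ℚ) * (∑ k ∈ Finset.Icc 1 (p - 1), (1 : ℚ) / (k : ℚ)) - (p : ℚ) ^ 2 / 2 * (∑ k ∈ Finset.Icc 1 (p - 1), (1 : ℚ) / (k : ℚ) ^ 2)
        + (p : ℚ) ^ 3 / 3 * (∑ k ∈ Finset.Icc 1 (p - 1), (1 : ℚ) / (k : ℚ) ^ 3) - (p : ℚ) ^ 4 / 4 * (∑ k ∈ Finset.Icc 1 (p - 1), (1 : ℚ) / (k : ℚ) ^ 4)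
        + (p : ℚ) ^ 5 / 5 * (∑ k ∈ Finset.Icc 1 (p - 1), (1 : ℚ) / (k : ℚ) ^ 5) - (p : ℚ) ^ 6 / 6 * (∑ k ∈ Finset.Icc 1 (p - 1), (1 : ℚ) / (k : ℚ) ^ 6)) : ℚ) : ℚ_[p])
      = 2*(p:ℚ_[p])^4 * (∑ k ∈ Finset.Ioc 0 m, tK p k)^2
        + (4:ℚ_[p])/3*(p:ℚ_[p])^6 * (∑ k ∈ Finset.Ioc 0 m, tK p k)^3
        - 4*(p:ℚ_[p])^6 * (∑ k ∈ Finset.Ioc 0 m, tK p k) * (∑ k ∈ Finset.Ioc 0 m, tK p k ^ 2)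
        + (11:ℚ_[p])/4*(p:ℚ_[p])^8 * (∑ k ∈ Finset.Ioc 0 m, tK p k ^ 4)
        - (6:ℚ_[p])/5*(p:ℚ_[p])^10 * (∑ k ∈ Finset.Ioc 0 m, tK p k ^ 5)
        + (1:ℚ_[p])/6*(p:ℚ_[p])^12 * (∑ k ∈ Finset.Ioc 0 m, tK p k ^ 6)
        + (∑ j ∈ Finset.Ico 4 (m+1), (2*(p:ℚ_[p])^2)^j * ∑ A ∈ Finset.powersetCard j (Finset.Ioc 0 m), ∏ k ∈ A, tK p k) := by
    rw [hRHSfull, h3]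
    linear_combination (2*(p:ℚ_[p])^4) * hn2 + ((4:ℚ_[p])/3*(p:ℚ_[p])^6) * hn3
  rw [hdiff]
  have hT1 : ‖2*(p:ℚ_[p])^4 * (∑ k ∈ Finset.Ioc 0 m, tK p k)^2‖ ≤ ((p:ℝ))⁻¹^8 := by
    rw [norm_mul, norm_mul, norm_pow, norm_pow, hnormp, hnorm2, one_mul]
    calc ((p:ℝ))⁻¹^4 * ‖(∑ k ∈ Finset.Ioc 0 m, tK p k)‖^2 ≤ ((p:ℝ))⁻¹^4 * (((p:ℝ))⁻¹^2)^2 := by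
          gcongr <;> first | exact hq1 | exact hqle 2 | exact hqle 4 | exact hqle 5 | exact hqle 6 | exact hnorm11
      _ = ((p:ℝ))⁻¹^8 := by ring
  have hT2 : ‖(4:ℚ_[p])/3*(p:ℚ_[p])^6 * (∑ k ∈ Finset.Ioc 0 m, tK p k)^3‖ ≤ ((p:ℝ))⁻¹^8 := by
    rw [norm_mul, norm_mul, norm_div, hnorm4, hnorm3, norm_pow, norm_pow, hnormp]
    calc 1/1 * ((p:ℝ))⁻¹^6 * ‖(∑ k ∈ Finset.Ioc 0 m, tK p k)‖^3 ≤ 1/1 * ((p:ℝ))⁻¹^6 * (((p:ℝ))⁻¹^2)^3 := by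
          gcongr <;> first | exact hq1 | exact hqle 2 | exact hqle 4 | exact hqle 5 | exact hqle 6 | exact hnorm11
      _ = ((p:ℝ))⁻¹^12 := by ring
      _ ≤ ((p:ℝ))⁻¹^8 := pow_le_pow_of_le_one hB0 hB1 (by omega)
  have hT3 : ‖4*(p:ℚ_[p])^6 * (∑ k ∈ Finset.Ioc 0 m, tK p k) * (∑ k ∈ Finset.Ioc 0 m, tK p k ^ 2)‖ ≤ ((p:ℝ))⁻¹^8 := by
    rw [norm_mul, norm_mul, norm_mul, norm_pow, hnormp, hnorm4, one_mul]
    calc ((p:ℝ))⁻¹^6 * ‖(∑ k ∈ Finset.Ioc 0 m, tK p k)‖ * ‖(∑ k ∈ Finset.Ioc 0 m, tK p k ^ 2)‖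
        ≤ ((p:ℝ))⁻¹^6 * ((p:ℝ))⁻¹^2 * 1 := by
          gcongr <;> first | exact hq1 | exact hqle 2 | exact hqle 4 | exact hqle 5 | exact hqle 6 | exact hnorm11
      _ = ((p:ℝ))⁻¹^8 := by ring
  have hT4 : ‖(11:ℚ_[p])/4*(p:ℚ_[p])^8 * (∑ k ∈ Finset.Ioc 0 m, tK p k ^ 4)‖ ≤ ((p:ℝ))⁻¹^8 := by
    rw [norm_mul, norm_mul, norm_div, hnorm4, norm_pow, hnormp]
    calc ‖(11:ℚ_[p])‖/1 * ((p:ℝ))⁻¹^8 * ‖(∑ k ∈ Finset.Ioc 0 m, tK p k ^ 4)‖ ≤ 1/1 * ((p:ℝ))⁻¹^8 * 1 := by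
          gcongr <;> first | exact hq1 | exact hqle 2 | exact hqle 4 | exact hqle 5 | exact hqle 6 | exact hnorm11
      _ = ((p:ℝ))⁻¹^8 := by ring
  have hT5 : ‖(6:ℚ_[p])/5*(p:ℚ_[p])^10 * (∑ k ∈ Finset.Ioc 0 m, tK p k ^ 5)‖ ≤ ((p:ℝ))⁻¹^8 := by
    rw [norm_mul, norm_mul, norm_div, hnorm6, hnorm5, norm_pow, hnormp]
    calc 1/1 * ((p:ℝ))⁻¹^10 * ‖(∑ k ∈ Finset.Ioc 0 m, tK p k ^ 5)‖ ≤ 1/1 * ((p:ℝ))⁻¹^10 * 1 := by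
          gcongr <;> first | exact hq1 | exact hqle 2 | exact hqle 4 | exact hqle 5 | exact hqle 6 | exact hnorm11
      _ = ((p:ℝ))⁻¹^10 := by ring
      _ ≤ ((p:ℝ))⁻¹^8 := pow_le_pow_of_le_one hB0 hB1 (by omega)
  have hT6 : ‖(1:ℚ_[p])/6*(p:ℚ_[p])^12 * (∑ k ∈ Finset.Ioc 0 m, tK p k ^ 6)‖ ≤ ((p:ℝ))⁻¹^8 := by
    rw [norm_mul, norm_mul, norm_div, hnorm6, norm_one, norm_pow, hnormp]
    calc 1/1 * ((p:ℝ))⁻¹^12 * ‖(∑ k ∈ Finset.Ioc 0 m, tK p k ^ 6)‖ ≤ 1/1 * ((p:ℝ))⁻¹^12 * 1 := by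
          gcongr <;> first | exact hq1 | exact hqle 2 | exact hqle 4 | exact hqle 5 | exact hqle 6 | exact hnorm11
      _ = ((p:ℝ))⁻¹^12 := by ring
      _ ≤ ((p:ℝ))⁻¹^8 := pow_le_pow_of_le_one hB0 hB1 (by omega)
  exact ultra_add (ultra_add (ultra_sub (ultra_add (ultra_sub (ultra_add hT1 hT2) hT3) hT4) hT5) hT6) htail
end

section
/- Let p be a Wolstenholme prime. Then C(2p-1, p-1) ≡ 1 + (3p/2)·∑ 1/k - (p²/4)·∑ 1/k² + (7p³/12)·∑ 1/k³ + (5p⁵/12)·∑ 1/k⁵ (mod p⁸), where sums run over k = 1, …, p-1. -/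
namespace Stmt10Aux

variable {p : ℕ} [Fact p.Prime]

theorem pn_pow (x : ℚ) (n : ℕ) : padicNorm p (x ^ n) = padicNorm p x ^ n := by
  induction n with
  | zero => simp [padicNorm.one]
  | succ n ih => rw [pow_succ, pow_succ, padicNorm.mul, ih]

theorem pn_add_le {x y b : ℚ} (hx : padicNorm p x ≤ b) (hy : padicNorm p y ≤ b) :
    padicNorm p (x + y) ≤ b :=
  le_trans padicNorm.nonarchimedean (max_le hx hy)

theorem pn_mul_le {x y a b : ℚ} (ha : 0 ≤ a) (hx : padicNorm p x ≤ a) (hy : padicNorm p y ≤ b) :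
    padicNorm p (x * y) ≤ a * b := by
  rw [padicNorm.mul]
  exact mul_le_mul hx hy (padicNorm.nonneg y) ha

theorem pn_sub_le {x y b : ℚ} (hx : padicNorm p x ≤ b) (hy : padicNorm p y ≤ b) :
    padicNorm p (x - y) ≤ b :=
  le_trans padicNorm.sub (max_le hx hy)

theorem pn_mul_le_one {x y : ℚ} (hx : padicNorm p x ≤ 1) (hy : padicNorm p y ≤ 1) :
    padicNorm p (x * y) ≤ 1 := by
  simpa using pn_mul_le (by norm_num) hx hy

theorem pn_p_pow (hp : 1 < p) (n : ℕ) :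
    padicNorm p ((p : ℚ) ^ n) = (p : ℚ) ^ (-(n : ℤ)) := by
  rw [pn_pow, padicNorm.padicNorm_p hp, inv_pow, ← zpow_natCast, ← zpow_neg]

theorem zpow_anti (hp : 1 < p) {a b : ℤ} (h : a ≤ b) :
    (p : ℚ) ^ (-b) ≤ (p : ℚ) ^ (-a) := by
  apply zpow_le_zpow_right₀ (by exact_mod_cast hp.le) (by omega)

theorem choose_prod (hp0 : 0 < p) :
    ∀ m : ℕ, (((p + m).choose m : ℕ) : ℚ) = ∏ k ∈ Finset.Icc 1 m, (1 + (p : ℚ) / k)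
  | 0 => by simp
  | (m + 1) => by
    rw [Finset.prod_Icc_succ_top (by omega : 1 ≤ m + 1), ← choose_prod hp0 m]
    have key := Nat.add_one_mul_choose_eq (p + m) m
    have hm1 : ((m : ℚ) + 1) ≠ 0 := by positivity
    have key' : ((p : ℚ) + m + 1) * ((p + m).choose m : ℚ)
        = ((p + m + 1).choose (m + 1) : ℚ) * ((m : ℚ) + 1) := by
      exact_mod_cast congrArg (Nat.cast : ℕ → ℚ) key
    have : (p : ℚ) + (m + 1 : ℕ) = (p : ℚ) + m + 1 := by push_cast; ring
    rw [show p + (m + 1) = p + m + 1 by omega]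
    field_simp
    push_cast
    linear_combination -key'

theorem sum_reflect (hp0 : 0 < p) (g : ℕ → ℚ) :
    ∑ k ∈ Finset.Icc 1 (p - 1), g (p - k) = ∑ k ∈ Finset.Icc 1 (p - 1), g k := by
  refine Finset.sum_nbij' (fun i => p - i) (fun i => p - i) ?_ ?_ ?_ ?_ ?_ <;>
    simp only [Finset.mem_Icc] <;> intro a ha
  · omega
  · omega
  · omega
  · omega
  · trivial

theorem prod_reflect (hp0 : 0 < p) (g : ℕ → ℚ) :
    ∏ k ∈ Finset.Icc 1 (p - 1), g (p - k) = ∏ k ∈ Finset.Icc 1 (p - 1), g k := by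
  refine Finset.prod_nbij' (fun i => p - i) (fun i => p - i) ?_ ?_ ?_ ?_ ?_ <;>
    simp only [Finset.mem_Icc] <;> intro a ha
  · omega
  · omega
  · omega
  · omega
  · trivial

theorem norm_unit (hp : p.Prime) {k : ℕ} (h1 : 1 ≤ k) (h2 : k ≤ p - 1) :
    padicNorm p (k : ℚ) = 1 := by
  rw [padicNorm.nat_eq_one_iff]
  intro hdvd
  have := Nat.le_of_dvd (by omega) hdvd
  have := hp.two_le
  omega

theorem cast_sub_of_le {k : ℕ} (h : k ≤ p) : ((p - k : ℕ) : ℚ) = (p : ℚ) - k := by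
  push_cast [Nat.cast_sub h]; ring

theorem norm_t (hp : p.Prime) {k : ℕ} (h1 : 1 ≤ k) (h2 : k ≤ p - 1) :
    padicNorm p (1 / ((k : ℚ) * ((p : ℚ) - k))) = 1 := by
  have h3 : ((p : ℚ) - k) = ((p - k : ℕ) : ℚ) := (cast_sub_of_le (by omega)).symm
  rw [padicNorm.div, padicNorm.one, padicNorm.mul, norm_unit hp h1 h2, h3,
    norm_unit hp (by omega) (by have := hp.two_le; omega)]
  norm_num

theorem trunc (hp : p.Prime) (h6 : ¬ p ∣ 6) {c : ℚ} (hc : padicNorm p c ≤ (p : ℚ) ^ (-2 : ℤ))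
    (t : ℕ → ℚ) (S : Finset ℕ) (ht : ∀ k ∈ S, padicNorm p (t k) ≤ 1) :
    ∃ ε : ℚ, padicNorm p ε ≤ 1 ∧
      ∏ k ∈ S, (1 + c * t k) =
        1 + c * (∑ k ∈ S, t k) + c ^ 2 * ((∑ k ∈ S, t k) ^ 2 - ∑ k ∈ S, t k ^ 2) / 2
          + c ^ 3 * ((∑ k ∈ S, t k) ^ 3 - 3 * (∑ k ∈ S, t k) * (∑ k ∈ S, t k ^ 2)
              + 2 * ∑ k ∈ S, t k ^ 3) / 6 + c ^ 4 * ε := by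
  classical
  have hp1 : (1 : ℕ) < p := hp.one_lt
  have hc1 : padicNorm p c ≤ 1 := le_trans hc (by
    have := zpow_anti (p := p) hp1 (a := 0) (b := 2) (by norm_num)
    simpa using this)
  have h6' : padicNorm p (6 : ℚ) = 1 := by
    have : ((6 : ℕ) : ℚ) = (6 : ℚ) := by norm_num
    rw [← this, padicNorm.nat_eq_one_iff]; exact h6
  induction S using Finset.induction_on with
  | empty => exact ⟨0, by simp [padicNorm.zero], by simp⟩
  | insert _ _ ha _ =>
    rename_i a S' IH'
    obtain ⟨ε, hε, heq⟩ := IH' (fun k hk => ht k (Finset.mem_insert_of_mem hk))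
    have hta : padicNorm p (t a) ≤ 1 := ht a (Finset.mem_insert_self a S')
    have hT1 : padicNorm p (∑ k ∈ S', t k) ≤ 1 :=
      padicNorm.sum_le' (fun k hk => ht k (Finset.mem_insert_of_mem hk)) zero_le_one
    have hT2 : padicNorm p (∑ k ∈ S', t k ^ 2) ≤ 1 :=
      padicNorm.sum_le' (fun k hk => by
        rw [pn_pow]; exact pow_le_one₀ (padicNorm.nonneg _) (ht k (Finset.mem_insert_of_mem hk)))
        zero_le_one
    have hT3 : padicNorm p (∑ k ∈ S', t k ^ 3) ≤ 1 :=
      padicNorm.sum_le' (fun k hk => by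
        rw [pn_pow]; exact pow_le_one₀ (padicNorm.nonneg _) (ht k (Finset.mem_insert_of_mem hk)))
        zero_le_one
    refine ⟨t a * (((∑ k ∈ S', t k) ^ 3 - 3 * (∑ k ∈ S', t k) * (∑ k ∈ S', t k ^ 2)
        + 2 * ∑ k ∈ S', t k ^ 3) / 6) + ε * (1 + c * t a), ?_, ?_⟩
    · apply pn_add_le
      · apply pn_mul_le_one hta
        rw [padicNorm.div, h6', div_one]
        apply pn_add_le
        · apply pn_sub_le
          · rw [pn_pow]; exact pow_le_one₀ (padicNorm.nonneg _) hT1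
          · apply pn_mul_le_one (pn_mul_le_one ?_ hT1) hT2
            have : ((3 : ℕ) : ℚ) = (3 : ℚ) := by norm_num
            rw [← this]; exact padicNorm.of_nat 3
        · apply pn_mul_le_one ?_ hT3
          have : ((2 : ℕ) : ℚ) = (2 : ℚ) := by norm_num
          rw [← this]; exact padicNorm.of_nat 2
      · apply pn_mul_le_one hε
        apply pn_add_le
        · simp [padicNorm.one]
        · exact pn_mul_le_one hc1 hta
    · rw [Finset.prod_insert ha, heq, Finset.sum_insert ha, Finset.sum_insert ha,
        Finset.sum_insert ha]
      ring

theorem pn_mono (hp1 : 1 < p) {x : ℚ} (a : ℕ) (b m : ℤ) (hx : padicNorm p x ≤ (p : ℚ) ^ (-b))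
    (h : m ≤ a + b) : padicNorm p ((p : ℚ) ^ a * x) ≤ (p : ℚ) ^ (-m) := by
  have hp0 : (0 : ℚ) < p := by exact_mod_cast Nat.lt_of_lt_of_le Nat.zero_lt_one hp1.le
  rw [padicNorm.mul, pn_p_pow hp1]
  calc (p : ℚ) ^ (-(a : ℤ)) * padicNorm p x ≤ (p : ℚ) ^ (-(a : ℤ)) * (p : ℚ) ^ (-b) :=
        mul_le_mul_of_nonneg_left hx (by positivity)
    _ = (p : ℚ) ^ (-((a : ℤ) + b)) := by
        rw [← zpow_add₀ (ne_of_gt hp0)]; ring_nf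
    _ ≤ (p : ℚ) ^ (-m) := zpow_anti hp1 (by omega)

theorem pn_const_mul {r y b : ℚ} (hr : padicNorm p r ≤ 1) (hb : 0 ≤ b)
    (hy : padicNorm p y ≤ b) : padicNorm p (r * y) ≤ b := by
  rw [padicNorm.mul]
  calc padicNorm p r * padicNorm p y ≤ 1 * b :=
        mul_le_mul hr hy (padicNorm.nonneg _) zero_le_one
    _ = b := one_mul b

theorem pn_nat_div (a b : ℕ) (hb : ¬ p ∣ b) {r : ℚ} (hr : r = (a : ℚ) / (b : ℚ)) :
    padicNorm p r ≤ 1 := by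
  rw [hr, padicNorm.div, (padicNorm.nat_eq_one_iff b).mpr hb, div_one]
  exact padicNorm.of_nat a

theorem not_dvd_pow23 (hp : p.Prime) (h2 : p ≠ 2) (h3 : p ≠ 3) (i j : ℕ) :
    ¬ p ∣ 2 ^ i * 3 ^ j := by
  intro h
  rcases (Nat.Prime.dvd_mul hp).mp h with h' | h'
  · exact h2 ((Nat.prime_dvd_prime_iff_eq hp Nat.prime_two).mp (hp.dvd_of_dvd_pow h'))
  · exact h3 ((Nat.prime_dvd_prime_iff_eq hp Nat.prime_three).mp (hp.dvd_of_dvd_pow h'))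

theorem hsum1 (hp : p.Prime) :
    2 * (∑ k ∈ Finset.Icc 1 (p - 1), (1 : ℚ) / (k : ℚ))
      = (p : ℚ) * ∑ k ∈ Finset.Icc 1 (p - 1), 1 / ((k : ℚ) * ((p : ℚ) - k)) := by
  have hrefl := sum_reflect hp.pos (fun k => (1 : ℚ) / (k : ℚ))
  calc 2 * (∑ k ∈ Finset.Icc 1 (p - 1), (1 : ℚ) / (k : ℚ))
      = (∑ k ∈ Finset.Icc 1 (p - 1), (1 : ℚ) / (k : ℚ))
        + ∑ k ∈ Finset.Icc 1 (p - 1), (1 : ℚ) / ((p - k : ℕ) : ℚ) := by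
        rw [show (∑ k ∈ Finset.Icc 1 (p - 1), (1 : ℚ) / ((p - k : ℕ) : ℚ))
            = ∑ k ∈ Finset.Icc 1 (p - 1), (1 : ℚ) / (k : ℚ) from hrefl]
        ring
    _ = ∑ k ∈ Finset.Icc 1 (p - 1), ((1 : ℚ) / (k : ℚ) + (1 : ℚ) / ((p - k : ℕ) : ℚ)) := by
        rw [← Finset.sum_add_distrib]
    _ = ∑ k ∈ Finset.Icc 1 (p - 1), ((p : ℚ) * (1 / ((k : ℚ) * ((p : ℚ) - k)))) := by
        apply Finset.sum_congr rfl
        intro k hk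
        rw [Finset.mem_Icc] at hk
        have h2 := hp.two_le
        have hc : ((p - k : ℕ) : ℚ) = (p : ℚ) - k := cast_sub_of_le (by omega)
        have h1 : (k : ℚ) ≠ 0 := Nat.cast_ne_zero.mpr (by omega)
        have hkp : (k : ℚ) < (p : ℚ) := by exact_mod_cast (by omega : k < p)
        have h3 : (p : ℚ) - k ≠ 0 := sub_ne_zero.mpr (ne_of_gt hkp)
        rw [hc]
        field_simp
        try ring
    _ = (p : ℚ) * ∑ k ∈ Finset.Icc 1 (p - 1), 1 / ((k : ℚ) * ((p : ℚ) - k)) := by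
        simp only [Finset.sum_sub_distrib, Finset.sum_add_distrib, ← Finset.mul_sum]

theorem hsum2 (hp : p.Prime) :
    2 * (∑ k ∈ Finset.Icc 1 (p - 1), (1 : ℚ) / (k : ℚ) ^ 2)
      = (p : ℚ) ^ 2 * (∑ k ∈ Finset.Icc 1 (p - 1), (1 / ((k : ℚ) * ((p : ℚ) - k))) ^ 2)
        - 2 * ∑ k ∈ Finset.Icc 1 (p - 1), 1 / ((k : ℚ) * ((p : ℚ) - k)) := by
  have hrefl := sum_reflect hp.pos (fun k => (1 : ℚ) / (k : ℚ) ^ 2)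
  calc 2 * (∑ k ∈ Finset.Icc 1 (p - 1), (1 : ℚ) / (k : ℚ) ^ 2)
      = (∑ k ∈ Finset.Icc 1 (p - 1), (1 : ℚ) / (k : ℚ) ^ 2)
        + ∑ k ∈ Finset.Icc 1 (p - 1), (1 : ℚ) / ((p - k : ℕ) : ℚ) ^ 2 := by
        rw [show (∑ k ∈ Finset.Icc 1 (p - 1), (1 : ℚ) / ((p - k : ℕ) : ℚ) ^ 2)
            = ∑ k ∈ Finset.Icc 1 (p - 1), (1 : ℚ) / (k : ℚ) ^ 2 from hrefl]
        ring
    _ = ∑ k ∈ Finset.Icc 1 (p - 1), ((1 : ℚ) / (k : ℚ) ^ 2 + (1 : ℚ) / ((p - k : ℕ) : ℚ) ^ 2) := by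
        rw [← Finset.sum_add_distrib]
    _ = ∑ k ∈ Finset.Icc 1 (p - 1), ((p : ℚ) ^ 2 * (1 / ((k : ℚ) * ((p : ℚ) - k))) ^ 2 - 2 * (1 / ((k : ℚ) * ((p : ℚ) - k)))) := by
        apply Finset.sum_congr rfl
        intro k hk
        rw [Finset.mem_Icc] at hk
        have h2 := hp.two_le
        have hc : ((p - k : ℕ) : ℚ) = (p : ℚ) - k := cast_sub_of_le (by omega)
        have h1 : (k : ℚ) ≠ 0 := Nat.cast_ne_zero.mpr (by omega)
        have hkp : (k : ℚ) < (p : ℚ) := by exact_mod_cast (by omega : k < p)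
        have h3 : (p : ℚ) - k ≠ 0 := sub_ne_zero.mpr (ne_of_gt hkp)
        rw [hc]
        field_simp
        try ring
    _ = (p : ℚ) ^ 2 * (∑ k ∈ Finset.Icc 1 (p - 1), (1 / ((k : ℚ) * ((p : ℚ) - k))) ^ 2)
        - 2 * ∑ k ∈ Finset.Icc 1 (p - 1), 1 / ((k : ℚ) * ((p : ℚ) - k)) := by
        simp only [Finset.sum_sub_distrib, Finset.sum_add_distrib, ← Finset.mul_sum]

theorem hsum3 (hp : p.Prime) :
    2 * (∑ k ∈ Finset.Icc 1 (p - 1), (1 : ℚ) / (k : ℚ) ^ 3)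
      = (p : ℚ) ^ 3 * (∑ k ∈ Finset.Icc 1 (p - 1), (1 / ((k : ℚ) * ((p : ℚ) - k))) ^ 3)
        - 3 * (p : ℚ) * ∑ k ∈ Finset.Icc 1 (p - 1), (1 / ((k : ℚ) * ((p : ℚ) - k))) ^ 2 := by
  have hrefl := sum_reflect hp.pos (fun k => (1 : ℚ) / (k : ℚ) ^ 3)
  calc 2 * (∑ k ∈ Finset.Icc 1 (p - 1), (1 : ℚ) / (k : ℚ) ^ 3)
      = (∑ k ∈ Finset.Icc 1 (p - 1), (1 : ℚ) / (k : ℚ) ^ 3)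
        + ∑ k ∈ Finset.Icc 1 (p - 1), (1 : ℚ) / ((p - k : ℕ) : ℚ) ^ 3 := by
        rw [show (∑ k ∈ Finset.Icc 1 (p - 1), (1 : ℚ) / ((p - k : ℕ) : ℚ) ^ 3)
            = ∑ k ∈ Finset.Icc 1 (p - 1), (1 : ℚ) / (k : ℚ) ^ 3 from hrefl]
        ring
    _ = ∑ k ∈ Finset.Icc 1 (p - 1), ((1 : ℚ) / (k : ℚ) ^ 3 + (1 : ℚ) / ((p - k : ℕ) : ℚ) ^ 3) := by
        rw [← Finset.sum_add_distrib]
    _ = ∑ k ∈ Finset.Icc 1 (p - 1), ((p : ℚ) ^ 3 * (1 / ((k : ℚ) * ((p : ℚ) - k))) ^ 3 - 3 * (p : ℚ) * (1 / ((k : ℚ) * ((p : ℚ) - k))) ^ 2) := by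
        apply Finset.sum_congr rfl
        intro k hk
        rw [Finset.mem_Icc] at hk
        have h2 := hp.two_le
        have hc : ((p - k : ℕ) : ℚ) = (p : ℚ) - k := cast_sub_of_le (by omega)
        have h1 : (k : ℚ) ≠ 0 := Nat.cast_ne_zero.mpr (by omega)
        have hkp : (k : ℚ) < (p : ℚ) := by exact_mod_cast (by omega : k < p)
        have h3 : (p : ℚ) - k ≠ 0 := sub_ne_zero.mpr (ne_of_gt hkp)
        rw [hc]
        field_simp
        try ring
    _ = (p : ℚ) ^ 3 * (∑ k ∈ Finset.Icc 1 (p - 1), (1 / ((k : ℚ) * ((p : ℚ) - k))) ^ 3)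
        - 3 * (p : ℚ) * ∑ k ∈ Finset.Icc 1 (p - 1), (1 / ((k : ℚ) * ((p : ℚ) - k))) ^ 2 := by
        simp only [Finset.sum_sub_distrib, Finset.sum_add_distrib, ← Finset.mul_sum]

theorem hsum5 (hp : p.Prime) :
    2 * (∑ k ∈ Finset.Icc 1 (p - 1), (1 : ℚ) / (k : ℚ) ^ 5)
      = (p : ℚ) ^ 5 * (∑ k ∈ Finset.Icc 1 (p - 1), (1 / ((k : ℚ) * ((p : ℚ) - k))) ^ 5)
        - 5 * (p : ℚ) ^ 3 * (∑ k ∈ Finset.Icc 1 (p - 1), (1 / ((k : ℚ) * ((p : ℚ) - k))) ^ 4)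
        + 5 * (p : ℚ) * ∑ k ∈ Finset.Icc 1 (p - 1), (1 / ((k : ℚ) * ((p : ℚ) - k))) ^ 3 := by
  have hrefl := sum_reflect hp.pos (fun k => (1 : ℚ) / (k : ℚ) ^ 5)
  calc 2 * (∑ k ∈ Finset.Icc 1 (p - 1), (1 : ℚ) / (k : ℚ) ^ 5)
      = (∑ k ∈ Finset.Icc 1 (p - 1), (1 : ℚ) / (k : ℚ) ^ 5)
        + ∑ k ∈ Finset.Icc 1 (p - 1), (1 : ℚ) / ((p - k : ℕ) : ℚ) ^ 5 := by
        rw [show (∑ k ∈ Finset.Icc 1 (p - 1), (1 : ℚ) / ((p - k : ℕ) : ℚ) ^ 5)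
            = ∑ k ∈ Finset.Icc 1 (p - 1), (1 : ℚ) / (k : ℚ) ^ 5 from hrefl]
        ring
    _ = ∑ k ∈ Finset.Icc 1 (p - 1), ((1 : ℚ) / (k : ℚ) ^ 5 + (1 : ℚ) / ((p - k : ℕ) : ℚ) ^ 5) := by
        rw [← Finset.sum_add_distrib]
    _ = ∑ k ∈ Finset.Icc 1 (p - 1), ((p : ℚ) ^ 5 * (1 / ((k : ℚ) * ((p : ℚ) - k))) ^ 5 - 5 * (p : ℚ) ^ 3 * (1 / ((k : ℚ) * ((p : ℚ) - k))) ^ 4 + 5 * (p : ℚ) * (1 / ((k : ℚ) * ((p : ℚ) - k))) ^ 3) := by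
        apply Finset.sum_congr rfl
        intro k hk
        rw [Finset.mem_Icc] at hk
        have h2 := hp.two_le
        have hc : ((p - k : ℕ) : ℚ) = (p : ℚ) - k := cast_sub_of_le (by omega)
        have h1 : (k : ℚ) ≠ 0 := Nat.cast_ne_zero.mpr (by omega)
        have hkp : (k : ℚ) < (p : ℚ) := by exact_mod_cast (by omega : k < p)
        have h3 : (p : ℚ) - k ≠ 0 := sub_ne_zero.mpr (ne_of_gt hkp)
        rw [hc]
        field_simp
        try ring
    _ = (p : ℚ) ^ 5 * (∑ k ∈ Finset.Icc 1 (p - 1), (1 / ((k : ℚ) * ((p : ℚ) - k))) ^ 5)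
        - 5 * (p : ℚ) ^ 3 * (∑ k ∈ Finset.Icc 1 (p - 1), (1 / ((k : ℚ) * ((p : ℚ) - k))) ^ 4)
        + 5 * (p : ℚ) * ∑ k ∈ Finset.Icc 1 (p - 1), (1 / ((k : ℚ) * ((p : ℚ) - k))) ^ 3 := by
        simp only [Finset.sum_sub_distrib, Finset.sum_add_distrib, ← Finset.mul_sum]

theorem prod_pair (hp : p.Prime) :
    ((Nat.choose (2 * p - 1) (p - 1) : ℕ) : ℚ) * ((Nat.choose (2 * p - 1) (p - 1) : ℕ) : ℚ)
      = ∏ k ∈ Finset.Icc 1 (p - 1),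
          (1 + (2 * (p : ℚ) ^ 2) * (1 / ((k : ℚ) * ((p : ℚ) - k)))) := by
  have hA : ((Nat.choose (2 * p - 1) (p - 1) : ℕ) : ℚ)
      = ∏ k ∈ Finset.Icc 1 (p - 1), (1 + (p : ℚ) / k) := by
    have h := choose_prod (p := p) hp.pos (p - 1)
    rwa [show p + (p - 1) = 2 * p - 1 from by have := hp.two_le; omega] at h
  have hArefl : ((Nat.choose (2 * p - 1) (p - 1) : ℕ) : ℚ)
      = ∏ k ∈ Finset.Icc 1 (p - 1), (1 + (p : ℚ) / ((p - k : ℕ) : ℚ)) := by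
    rw [hA]; exact (prod_reflect hp.pos (fun k => 1 + (p : ℚ) / (k : ℚ))).symm
  nth_rewrite 1 [hArefl]
  rw [hA]
  rw [← Finset.prod_mul_distrib]
  apply Finset.prod_congr rfl
  intro k hk
  rw [Finset.mem_Icc] at hk
  have h2 := hp.two_le
  have hc : ((p - k : ℕ) : ℚ) = (p : ℚ) - k := cast_sub_of_le (by omega)
  have h1 : (k : ℚ) ≠ 0 := Nat.cast_ne_zero.mpr (by omega)
  have hkp : (k : ℚ) < (p : ℚ) := by exact_mod_cast (by omega : k < p)
  have h3 : (p : ℚ) - k ≠ 0 := sub_ne_zero.mpr (ne_of_gt hkp)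
  simp only [hc]
  field_simp
  ring

theorem pn_mono0 (hp1 : 1 < p) {x : ℚ} (a : ℕ) (m : ℤ) (hx : padicNorm p x ≤ 1)
    (h : m ≤ a) : padicNorm p ((p : ℚ) ^ a * x) ≤ (p : ℚ) ^ (-m) := by
  apply pn_mono hp1 a 0 m _ (by omega)
  simpa using hx

theorem pn_cpow_mul (hp1 : 1 < p) {c x : ℚ} (hceq : padicNorm p c = (p : ℚ) ^ (-2 : ℤ))
    (n : ℕ) (hx : padicNorm p x ≤ 1) {m : ℤ} (hm : m ≤ 2 * n) :
    padicNorm p (c ^ n * x) ≤ (p : ℚ) ^ (-m) := by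
  have hp0 : (0 : ℚ) < p := by exact_mod_cast Nat.lt_of_lt_of_le Nat.zero_lt_one hp1.le
  rw [padicNorm.mul, pn_pow, hceq, ← zpow_natCast ((p : ℚ) ^ (-2 : ℤ)) n, ← zpow_mul]
  calc (p : ℚ) ^ (-2 * (n : ℤ)) * padicNorm p x ≤ (p : ℚ) ^ (-2 * (n : ℤ)) * 1 :=
        mul_le_mul_of_nonneg_left hx (by positivity)
    _ = (p : ℚ) ^ (-(2 * (n : ℤ))) := by rw [mul_one]; ring_nf
    _ ≤ (p : ℚ) ^ (-m) := zpow_anti hp1 (by omega)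

end Stmt10Aux

set_option maxHeartbeats 2000000 in
open Stmt10Aux in
theorem stmt10 (p : ℕ) (hp : p.Prime)
    (hw : PadicCong p 4 ((Nat.choose (2 * p - 1) (p - 1)) : ℚ) 1) :
    PadicCong p 8 ((Nat.choose (2 * p - 1) (p - 1)) : ℚ)
      (1 + 3 * (p : ℚ) / 2 * (∑ k ∈ Finset.Icc 1 (p - 1), (1 : ℚ) / (k : ℚ)) - (p : ℚ) ^ 2 / 4 * (∑ k ∈ Finset.Icc 1 (p - 1), (1 : ℚ) / (k : ℚ) ^ 2)
        + 7 * (p : ℚ) ^ 3 / 12 * (∑ k ∈ Finset.Icc 1 (p - 1), (1 : ℚ) / (k : ℚ) ^ 3) + 5 * (p : ℚ) ^ 5 / 12 * (∑ k ∈ Finset.Icc 1 (p - 1), (1 : ℚ) / (k : ℚ) ^ 5)) := by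
  have hF : Fact p.Prime := ⟨hp⟩
  unfold PadicCong at hw ⊢
  rw [show (-((4 : ℕ) : ℤ)) = (-4 : ℤ) from by norm_num] at hw
  rw [show (-((8 : ℕ) : ℤ)) = (-8 : ℤ) from by norm_num]
  by_cases hp2 : p = 2
  · exfalso
    subst hp2
    rw [show Nat.choose (2 * 2 - 1) (2 - 1) = 3 from by decide] at hw
    rw [show ((3 : ℕ) : ℚ) - 1 = ((2 : ℕ) : ℚ) from by norm_num] at hw
    rw [padicNorm.padicNorm_p (by norm_num)] at hw
    norm_num at hw
  by_cases hp3 : p = 3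
  · exfalso
    subst hp3
    rw [show Nat.choose (2 * 3 - 1) (3 - 1) = 10 from by decide] at hw
    rw [show ((10 : ℕ) : ℚ) - 1 = ((3 : ℕ) : ℚ) ^ 2 from by norm_num] at hw
    rw [pn_pow, padicNorm.padicNorm_p (by norm_num)] at hw
    norm_num at hw
  have hp1 : 1 < p := hp.one_lt
  have hq0 : (0 : ℚ) < p := by exact_mod_cast hp.pos
  have hqne : (p : ℚ) ≠ 0 := ne_of_gt hq0
  have h2 : ¬ p ∣ 2 := by have := not_dvd_pow23 hp hp2 hp3 1 0; simpa using this
  have h3 : ¬ p ∣ 3 := by have := not_dvd_pow23 hp hp2 hp3 0 1; simpa using this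
  have h6 : ¬ p ∣ 6 := by have := not_dvd_pow23 hp hp2 hp3 1 1; norm_num at this; exact this
  have hd12 : ¬ p ∣ 12 := by have := not_dvd_pow23 hp hp2 hp3 2 1; norm_num at this; exact this
  have hd9 : ¬ p ∣ 9 := by have := not_dvd_pow23 hp hp2 hp3 0 2; norm_num at this; exact this
  have hd24 : ¬ p ∣ 24 := by have := not_dvd_pow23 hp hp2 hp3 3 1; norm_num at this; exact this
  have hd288 : ¬ p ∣ 288 := by have := not_dvd_pow23 hp hp2 hp3 5 2; norm_num at this; exact this
  have hd576 : ¬ p ∣ 576 := by have := not_dvd_pow23 hp hp2 hp3 6 2; norm_num at this; exact this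
  have hd1 : ¬ p ∣ 1 := by simpa using hp.one_lt.ne'
  have h2n : padicNorm p (2 : ℚ) = 1 := by
    have := (padicNorm.nat_eq_one_iff (p := p) 2).mpr h2; simpa using this
  have h6n : padicNorm p (6 : ℚ) = 1 := by
    have := (padicNorm.nat_eq_one_iff (p := p) 6).mpr h6; simpa using this
  -- abbreviations
  have hceq : padicNorm p (2 * (p : ℚ) ^ 2) = (p : ℚ) ^ (-2 : ℤ) := by
    rw [padicNorm.mul, h2n, one_mul, pn_p_pow hp1]
    norm_num
  have htn : ∀ k ∈ Finset.Icc 1 (p - 1),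
      padicNorm p ((fun k => 1 / ((k : ℚ) * ((p : ℚ) - k))) k) ≤ 1 := by
    intro k hk
    rw [Finset.mem_Icc] at hk
    exact le_of_eq (norm_t hp hk.1 hk.2)
  obtain ⟨ε, hε, hP⟩ := trunc hp h6 (le_of_eq hceq)
    (fun k => 1 / ((k : ℚ) * ((p : ℚ) - k))) (Finset.Icc 1 (p - 1)) htn
  have hpair := prod_pair (p := p) hp
  have hAAeq := hpair.trans hP
  have hs1 := hsum1 (p := p) hp
  have hs2 := hsum2 (p := p) hp
  have hs3 := hsum3 (p := p) hp
  have hs5 := hsum5 (p := p) hp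
  set U1 := ∑ k ∈ Finset.Icc 1 (p - 1), 1 / ((k : ℚ) * ((p : ℚ) - k)) with hU1d
  set U2 := ∑ k ∈ Finset.Icc 1 (p - 1), (1 / ((k : ℚ) * ((p : ℚ) - k))) ^ 2 with hU2d
  set U3 := ∑ k ∈ Finset.Icc 1 (p - 1), (1 / ((k : ℚ) * ((p : ℚ) - k))) ^ 3 with hU3d
  set U4 := ∑ k ∈ Finset.Icc 1 (p - 1), (1 / ((k : ℚ) * ((p : ℚ) - k))) ^ 4 with hU4d
  set U5 := ∑ k ∈ Finset.Icc 1 (p - 1), (1 / ((k : ℚ) * ((p : ℚ) - k))) ^ 5 with hU5d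
  set A : ℚ := ((Nat.choose (2 * p - 1) (p - 1) : ℕ) : ℚ) with hAd
  -- norms of the U's
  have hUb : ∀ m : ℕ, padicNorm p
      (∑ k ∈ Finset.Icc 1 (p - 1), (1 / ((k : ℚ) * ((p : ℚ) - k))) ^ m) ≤ 1 := by
    intro m
    apply padicNorm.sum_le' _ zero_le_one
    intro k hk
    rw [Finset.mem_Icc] at hk
    rw [pn_pow]
    exact pow_le_one₀ (padicNorm.nonneg _) (le_of_eq (norm_t hp hk.1 hk.2))
  have hU1b : padicNorm p U1 ≤ 1 := by
    rw [hU1d]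
    apply padicNorm.sum_le' _ zero_le_one
    intro k hk
    rw [Finset.mem_Icc] at hk
    exact le_of_eq (norm_t hp hk.1 hk.2)
  have hU2b : padicNorm p U2 ≤ 1 := hUb 2
  have hU3b : padicNorm p U3 ≤ 1 := hUb 3
  have hU4b : padicNorm p U4 ≤ 1 := hUb 4
  have hU5b : padicNorm p U5 ≤ 1 := hUb 5
  -- the RHS of the statement in terms of the U's
  have hR : 1 + 3 * (p : ℚ) / 2 * (∑ k ∈ Finset.Icc 1 (p - 1), (1 : ℚ) / (k : ℚ))
        - (p : ℚ) ^ 2 / 4 * (∑ k ∈ Finset.Icc 1 (p - 1), (1 : ℚ) / (k : ℚ) ^ 2)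
        + 7 * (p : ℚ) ^ 3 / 12 * (∑ k ∈ Finset.Icc 1 (p - 1), (1 : ℚ) / (k : ℚ) ^ 3)
        + 5 * (p : ℚ) ^ 5 / 12 * (∑ k ∈ Finset.Icc 1 (p - 1), (1 : ℚ) / (k : ℚ) ^ 5)
      = 1 + (p : ℚ) ^ 2 * U1 - (p : ℚ) ^ 4 * U2 + (4 / 3) * (p : ℚ) ^ 6 * U3
        - (25 / 24) * (p : ℚ) ^ 8 * U4 + (5 / 24) * (p : ℚ) ^ 10 * U5 := by
    linear_combination (3 * (p : ℚ) / 4) * hs1 - ((p : ℚ) ^ 2 / 8) * hs2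
      + (7 * (p : ℚ) ^ 3 / 24) * hs3 + (5 * (p : ℚ) ^ 5 / 24) * hs5
  set R : ℚ := 1 + (p : ℚ) ^ 2 * U1 - (p : ℚ) ^ 4 * U2 + (4 / 3) * (p : ℚ) ^ 6 * U3
        - (25 / 24) * (p : ℚ) ^ 8 * U4 + (5 / 24) * (p : ℚ) ^ 10 * U5 with hRd
  rw [hR]
  -- extract the norm of U1 from the Wolstenholme hypothesis
  have hA2 : padicNorm p (A * A - 1) ≤ (p : ℚ) ^ (-4 : ℤ) := by
    have he : A * A - 1 = (A - 1) * (A + 1) := by ring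
    have hA1' : padicNorm p (A + 1) ≤ 1 := by
      have he2 : A + 1 = (A - 1) + 2 := by ring
      rw [he2]
      apply pn_add_le _ (le_of_eq h2n)
      exact le_trans hw (le_trans (zpow_anti hp1 (by norm_num : (0:ℤ) ≤ 4)) (by norm_num))
    rw [he, padicNorm.mul]
    calc padicNorm p (A - 1) * padicNorm p (A + 1) ≤ (p : ℚ) ^ (-4 : ℤ) * 1 :=
          mul_le_mul hw hA1' (padicNorm.nonneg _) (by positivity)
      _ = (p : ℚ) ^ (-4 : ℤ) := mul_one _
  have hX2 : padicNorm p ((U1 ^ 2 - U2) / 2) ≤ 1 := by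
    rw [padicNorm.div, h2n, div_one]
    apply pn_sub_le _ hU2b
    rw [pn_pow]; exact pow_le_one₀ (padicNorm.nonneg _) hU1b
  have hX3 : padicNorm p ((U1 ^ 3 - 3 * U1 * U2 + 2 * U3) / 6) ≤ 1 := by
    rw [padicNorm.div, h6n, div_one]
    apply pn_add_le
    · apply pn_sub_le
      · rw [pn_pow]; exact pow_le_one₀ (padicNorm.nonneg _) hU1b
      · apply pn_mul_le_one (pn_mul_le_one _ hU1b) hU2b
        have := padicNorm.of_nat (p := p) 3; simpa using this
    · apply pn_mul_le_one _ hU3b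
      have := padicNorm.of_nat (p := p) 2; simpa using this
  have hcU1 : padicNorm p (2 * (p : ℚ) ^ 2 * U1) ≤ (p : ℚ) ^ (-4 : ℤ) := by
    have hkey : 2 * (p : ℚ) ^ 2 * U1 = (A * A - 1)
        - (2 * (p : ℚ) ^ 2) ^ 2 * ((U1 ^ 2 - U2) / 2)
        - (2 * (p : ℚ) ^ 2) ^ 3 * ((U1 ^ 3 - 3 * U1 * U2 + 2 * U3) / 6)
        - (2 * (p : ℚ) ^ 2) ^ 4 * ε := by linear_combination -hAAeq
    rw [hkey]
    apply pn_sub_le (pn_sub_le (pn_sub_le hA2 ?_) ?_) ?_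
    · exact pn_cpow_mul hp1 hceq 2 hX2 (by norm_num)
    · exact pn_cpow_mul hp1 hceq 3 hX3 (by norm_num)
    · exact pn_cpow_mul hp1 hceq 4 hε (by norm_num)
  have hU1n : padicNorm p U1 ≤ (p : ℚ) ^ (-2 : ℤ) := by
    rw [padicNorm.mul, hceq] at hcU1
    have h4eq : ((p : ℚ)) ^ (-4 : ℤ) = (p : ℚ) ^ (-2 : ℤ) * (p : ℚ) ^ (-2 : ℤ) := by
      rw [← zpow_add₀ hqne]; norm_num
    rw [h4eq] at hcU1
    have hpos : (0 : ℚ) < (p : ℚ) ^ (-2 : ℤ) := by positivity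
    exact (mul_le_mul_iff_right₀ hpos).mp hcU1
  have hU1mul : ∀ x : ℚ, padicNorm p x ≤ 1 → padicNorm p (U1 * x) ≤ (p : ℚ) ^ (-2 : ℤ) := by
    intro x hx
    have := pn_mul_le (p := p) (by positivity) hU1n hx
    rwa [mul_one] at this
  have hU11 : padicNorm p (U1 * U1) ≤ (p : ℚ) ^ (-4 : ℤ) := by
    refine le_trans (pn_mul_le (p := p) (by positivity) hU1n hU1n) (le_of_eq ?_)
    rw [← zpow_add₀ hqne]; norm_num
  -- main difference bound
  have hARex : padicNorm p (A * A - R * R) ≤ (p : ℚ) ^ (-8 : ℤ) := by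
    have hkey2 : A * A - R * R = (2 * (p : ℚ) ^ 2) ^ 4 * ε
        + ((1:ℚ) * ((p : ℚ) ^ 4 * (U1 * U1))
        - 2 * ((p : ℚ) ^ 6 * (U1 * U2))
        + (4/3) * ((p : ℚ) ^ 6 * (U1 * (U1 * U1)))
        + (25/12) * ((p : ℚ) ^ 8 * U4)
        - (1:ℚ) * ((p : ℚ) ^ 8 * (U2 * U2))
        - (8/3) * ((p : ℚ) ^ 8 * (U1 * U3))
        - (5/12) * ((p : ℚ) ^ 10 * U5)
        + (8/3) * ((p : ℚ) ^ 10 * (U2 * U3))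
        + (25/12) * ((p : ℚ) ^ 10 * (U1 * U4))
        - (16/9) * ((p : ℚ) ^ 12 * (U3 * U3))
        - (25/12) * ((p : ℚ) ^ 12 * (U2 * U4))
        - (5/12) * ((p : ℚ) ^ 12 * (U1 * U5))
        + (25/9) * ((p : ℚ) ^ 14 * (U3 * U4))
        + (5/12) * ((p : ℚ) ^ 14 * (U2 * U5))
        - (625/576) * ((p : ℚ) ^ 16 * (U4 * U4))
        - (5/9) * ((p : ℚ) ^ 16 * (U3 * U5))
        + (125/288) * ((p : ℚ) ^ 18 * (U4 * U5))
        - (25/576) * ((p : ℚ) ^ 20 * (U5 * U5))) := by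
      rw [hRd]
      linear_combination hAAeq
    rw [hkey2]
    have hb8 : (0:ℚ) ≤ (p : ℚ) ^ (-8 : ℤ) := by positivity
    apply pn_add_le (pn_cpow_mul hp1 hceq 4 hε (by norm_num))
    all_goals repeat' first | apply pn_add_le | apply pn_sub_le
    · exact pn_const_mul (pn_nat_div 1 1 hd1 (by norm_num)) hb8
        (pn_mono hp1 4 4 8 hU11 (by norm_num))
    · exact pn_const_mul (pn_nat_div 2 1 hd1 (by norm_num)) hb8
        (pn_mono hp1 6 2 8 (hU1mul _ hU2b) (by norm_num))
    · exact pn_const_mul (pn_nat_div 4 3 h3 (by norm_num)) hb8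
        (pn_mono hp1 6 2 8 (hU1mul _ (pn_mul_le_one hU1b hU1b)) (by norm_num))
    · exact pn_const_mul (pn_nat_div 25 12 hd12 (by norm_num)) hb8
        (pn_mono0 hp1 8 8 hU4b (by norm_num))
    · exact pn_const_mul (pn_nat_div 1 1 hd1 (by norm_num)) hb8
        (pn_mono0 hp1 8 8 (pn_mul_le_one hU2b hU2b) (by norm_num))
    · exact pn_const_mul (pn_nat_div 8 3 h3 (by norm_num)) hb8
        (pn_mono0 hp1 8 8 (pn_mul_le_one hU1b hU3b) (by norm_num))
    · exact pn_const_mul (pn_nat_div 5 12 hd12 (by norm_num)) hb8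
        (pn_mono0 hp1 10 8 hU5b (by norm_num))
    · exact pn_const_mul (pn_nat_div 8 3 h3 (by norm_num)) hb8
        (pn_mono0 hp1 10 8 (pn_mul_le_one hU2b hU3b) (by norm_num))
    · exact pn_const_mul (pn_nat_div 25 12 hd12 (by norm_num)) hb8
        (pn_mono0 hp1 10 8 (pn_mul_le_one hU1b hU4b) (by norm_num))
    · exact pn_const_mul (pn_nat_div 16 9 hd9 (by norm_num)) hb8
        (pn_mono0 hp1 12 8 (pn_mul_le_one hU3b hU3b) (by norm_num))
    · exact pn_const_mul (pn_nat_div 25 12 hd12 (by norm_num)) hb8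
        (pn_mono0 hp1 12 8 (pn_mul_le_one hU2b hU4b) (by norm_num))
    · exact pn_const_mul (pn_nat_div 5 12 hd12 (by norm_num)) hb8
        (pn_mono0 hp1 12 8 (pn_mul_le_one hU1b hU5b) (by norm_num))
    · exact pn_const_mul (pn_nat_div 25 9 hd9 (by norm_num)) hb8
        (pn_mono0 hp1 14 8 (pn_mul_le_one hU3b hU4b) (by norm_num))
    · exact pn_const_mul (pn_nat_div 5 12 hd12 (by norm_num)) hb8
        (pn_mono0 hp1 14 8 (pn_mul_le_one hU2b hU5b) (by norm_num))
    · exact pn_const_mul (pn_nat_div 625 576 hd576 (by norm_num)) hb8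
        (pn_mono0 hp1 16 8 (pn_mul_le_one hU4b hU4b) (by norm_num))
    · exact pn_const_mul (pn_nat_div 5 9 hd9 (by norm_num)) hb8
        (pn_mono0 hp1 16 8 (pn_mul_le_one hU3b hU5b) (by norm_num))
    · exact pn_const_mul (pn_nat_div 125 288 hd288 (by norm_num)) hb8
        (pn_mono0 hp1 18 8 (pn_mul_le_one hU4b hU5b) (by norm_num))
    · exact pn_const_mul (pn_nat_div 25 576 hd576 (by norm_num)) hb8
        (pn_mono0 hp1 20 8 (pn_mul_le_one hU5b hU5b) (by norm_num))
  -- norm of R - 1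
  have hRn : padicNorm p (R - 1) ≤ (p : ℚ) ^ (-4 : ℤ) := by
    have hb4 : (0:ℚ) ≤ (p : ℚ) ^ (-4 : ℤ) := by positivity
    have he : R - 1 = (1:ℚ) * ((p : ℚ) ^ 2 * U1) - (1:ℚ) * ((p : ℚ) ^ 4 * U2)
        + (4/3) * ((p : ℚ) ^ 6 * U3) - (25/24) * ((p : ℚ) ^ 8 * U4)
        + (5/24) * ((p : ℚ) ^ 10 * U5) := by rw [hRd]; ring
    rw [he]
    repeat' first | apply pn_add_le | apply pn_sub_le
    · exact pn_const_mul (pn_nat_div 1 1 hd1 (by norm_num)) hb4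
        (pn_mono hp1 2 2 4 hU1n (by norm_num))
    · exact pn_const_mul (pn_nat_div 1 1 hd1 (by norm_num)) hb4
        (pn_mono0 hp1 4 4 hU2b (by norm_num))
    · exact pn_const_mul (pn_nat_div 4 3 h3 (by norm_num)) hb4
        (pn_mono0 hp1 6 4 hU3b (by norm_num))
    · exact pn_const_mul (pn_nat_div 25 24 hd24 (by norm_num)) hb4
        (pn_mono0 hp1 8 4 hU4b (by norm_num))
    · exact pn_const_mul (pn_nat_div 5 24 hd24 (by norm_num)) hb4
        (pn_mono0 hp1 10 4 hU5b (by norm_num))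
  -- norm of A + R
  have hApR : padicNorm p (A + R) = 1 := by
    have he : A + R = ((A - 1) + (R - 1)) + 2 := by ring
    have hx4 : padicNorm p ((A - 1) + (R - 1)) ≤ (p : ℚ) ^ (-4 : ℤ) := pn_add_le hw hRn
    have hlt1 : (p : ℚ) ^ (-4 : ℤ) < 1 :=
      zpow_lt_one_of_neg₀ (by exact_mod_cast hp1) (by norm_num)
    have hxlt : padicNorm p ((A - 1) + (R - 1)) < 1 := lt_of_le_of_lt hx4 hlt1
    rw [he, padicNorm.add_eq_max_of_ne (by rw [h2n]; exact ne_of_lt hxlt), h2n]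
    exact max_eq_right (le_of_lt hxlt)
  have hne0 : A + R ≠ 0 := by
    intro h0
    rw [h0] at hApR
    simp [padicNorm.zero] at hApR
  have hfrac : A - R = (A * A - R * R) / (A + R) := by
    field_simp
    ring
  rw [hfrac, padicNorm.div, hApR, div_one]
  exact hARex
end
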